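/- arXiv:1111.3795 — 8 statements merged into one kernel-verified Lean document; each statement's English description precedes it below -/
import Mathlib

section
/- Let (f_n)_{n≥1} be a sequence of μ₀-integrable functions that is uniformly integrable with respect to μ₀, and let f₀ ∈ L¹(μ₀) be such that ∫_E F·f_n dμ₀ → ∫_E F·f₀ dμ₀ as n → ∞ for every F ∈ C_b(E). Then ∫_E F·f_n dμ₀ → ∫_E F·f₀ dμ₀ as n → ∞ for every bounded Borel measurable F : E → ℝ. -/
open MeasureTheory Filter Set

/-- clamping min is 1-Lipschitz -/
lemma abs_min_sub_min_le_abs' (a b c : ℝ) : |min a c - min b c| ≤ |a - b| := by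
  have h3 := le_abs_self (a - b); have h4 := neg_abs_le (a - b)
  rcases le_total a c with h1 | h1 <;> rcases le_total b c with h2 | h2 <;>
    rw [abs_le] <;> constructor <;>
    simp [min_eq_left, min_eq_right, h1, h2] <;> linarith

/-- tail of a single integrable function is small -/
lemma tail_small {E : Type*} [MeasurableSpace E] (μ : Measure E) (h : E → ℝ)
    (hh : Integrable h μ) {ε : ℝ} (hε : 0 < ε) :
    ∃ R : ℝ, ∫ x in {x | R < |h x|}, |h x| ∂μ < ε := by
  set h' := hh.1.mk h with hh'def
  have hhe : h =ᵐ[μ] h' := hh.1.ae_eq_mk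
  have h'm : Measurable h' := hh.1.stronglyMeasurable_mk.measurable
  have hh' : Integrable h' μ := hh.congr hhe
  have key : Tendsto (fun n : ℕ => ∫ x, ({x | (n:ℝ) < |h' x|}.indicator (fun x => |h' x|)) x ∂μ)
      atTop (nhds (∫ x, (0:ℝ) ∂μ)) := by
    refine tendsto_integral_of_dominated_convergence (fun x => |h' x|) ?_ hh'.abs ?_ ?_
    · intro n
      exact (hh'.abs.1.indicator (measurableSet_lt measurable_const h'm.abs))
    · intro n
      filter_upwards with x
      by_cases hx : x ∈ {x | (n:ℝ) < |h' x|}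
      · rw [Set.indicator_of_mem hx]; simp [abs_abs]
      · rw [Set.indicator_of_notMem hx]; simp [abs_nonneg]
    · filter_upwards with x
      obtain ⟨n, hn⟩ := exists_nat_ge (|h' x|)
      apply tendsto_atTop_of_eventually_const (i₀ := n)
      intro m hm
      rw [Set.indicator_of_notMem]
      simp only [Set.mem_setOf_eq, not_lt]
      exact hn.trans (by exact_mod_cast hm)
  rw [integral_zero] at key
  rw [Metric.tendsto_atTop] at key
  obtain ⟨n, hn⟩ := key ε hε
  have := hn n le_rfl
  rw [Real.dist_eq, sub_zero] at this
  refine ⟨n, ?_⟩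
  have heq : ∫ x in {x | (n:ℝ) < |h x|}, |h x| ∂μ
      = ∫ x, ({x | (n:ℝ) < |h' x|}.indicator (fun x => |h' x|)) x ∂μ := by
    rw [integral_indicator (measurableSet_lt measurable_const h'm.abs)]
    rw [setIntegral_congr_set (t := {x | (n:ℝ) < |h' x|}) (by filter_upwards [hhe] with x hx; show ((n:ℝ) < |h x|) = ((n:ℝ) < |h' x|); rw [hx])]
    exact integral_congr_ae (ae_restrict_of_ae (by filter_upwards [hhe] with x hx; rw [hx]))
  rw [heq]
  calc _ ≤ |∫ x, ({x | (n:ℝ) < |h' x|}.indicator (fun x => |h' x|)) x ∂μ| := le_abs_self _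
  _ < ε := this

/-- key estimate -/
lemma key_bound {E : Type*} [MeasurableSpace E] (μ : Measure E) (φ h : E → ℝ)
    (hφi : Integrable φ μ) (hh : Integrable h μ)
    (C R : ℝ) (hC : 0 ≤ C) (hR : 0 ≤ R) (hφb : ∀ x, |φ x| ≤ C) :
    ∫ x, |φ x * h x| ∂μ ≤ R * ∫ x, |φ x| ∂μ + C * ∫ x in {x | R < |h x|}, |h x| ∂μ := by
  set h' := hh.1.mk h with hh'def
  have hhe : h =ᵐ[μ] h' := hh.1.ae_eq_mk
  have h'm : Measurable h' := hh.1.stronglyMeasurable_mk.measurable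
  have hh' : Integrable h' μ := hh.congr hhe
  set s : Set E := {x | R < |h' x|} with hsdef
  have hs : MeasurableSet s := measurableSet_lt measurable_const h'm.abs
  have hinds : Integrable (s.indicator fun x => |h' x|) μ := hh'.abs.indicator hs
  have h1 : ∫ x, |φ x * h x| ∂μ
      ≤ ∫ x, (R * |φ x| + C * (s.indicator (fun x => |h' x|)) x) ∂μ := by
    refine integral_mono_ae ((hh.bdd_mul hφi.1 (c := C) (ae_of_all _ (by simpa [Real.norm_eq_abs] using hφb))).abs)
      ((hφi.abs.const_mul R).add (hinds.const_mul C)) ?_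
    filter_upwards [hhe] with x hx
    by_cases hxs : x ∈ s
    · rw [Set.indicator_of_mem hxs]
      have : |φ x * h x| ≤ C * |h' x| := by
        rw [abs_mul, hx]
        exact mul_le_mul_of_nonneg_right (hφb x) (abs_nonneg _)
      have hφ0 : 0 ≤ |φ x| := abs_nonneg _
      nlinarith
    · have hxR : |h x| ≤ R := by rw [hx]; simpa [hsdef] using hxs
      rw [Set.indicator_of_notMem hxs]
      have : |φ x * h x| ≤ |φ x| * R := by
        rw [abs_mul]
        exact mul_le_mul_of_nonneg_left hxR (abs_nonneg _)
      linarith [this]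
  have h2 : ∫ x, (R * |φ x| + C * (s.indicator (fun x => |h' x|)) x) ∂μ
      = R * ∫ x, |φ x| ∂μ + C * ∫ x in s, |h' x| ∂μ := by
    rw [integral_add (hφi.abs.const_mul R) (hinds.const_mul C),
      integral_const_mul, integral_const_mul, integral_indicator hs]
  have h3 : ∫ x in s, |h' x| ∂μ = ∫ x in {x | R < |h x|}, |h x| ∂μ := by
    rw [setIntegral_congr_set (t := {x | R < |h x|}) (by filter_upwards [hhe] with x hx; show (R < |h' x|) = (R < |h x|); rw [hx])]
    exact integral_congr_ae (ae_restrict_of_ae (by filter_upwards [hhe] with x hx; rw [hx]))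
  rw [h2, h3] at h1
  exact h1

/-- If `(f n)` is uniformly integrable w.r.t. the finite Borel measure `μ₀`, the bounded
continuous functions are dense in `L¹(μ₀)`, and `∫ F * f n → ∫ F * f₀` for all bounded
continuous `F`, then the same convergence holds for all bounded Borel measurable `F`. -/
theorem stmt0 {E : Type*} [TopologicalSpace E] [MeasurableSpace E] [BorelSpace E]
    (μ₀ : Measure E) [IsFiniteMeasure μ₀]
    (f : ℕ → E → ℝ) (f₀ : E → ℝ)
    (hf : ∀ n, Integrable (f n) μ₀) (hf₀ : Integrable f₀ μ₀)
    (hdense : ∀ g : E → ℝ, Integrable g μ₀ → ∀ δ : ℝ, 0 < δ →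
      ∃ F : E → ℝ, Continuous F ∧ (∃ M : ℝ, ∀ x, |F x| ≤ M) ∧
        ∫ x, |F x - g x| ∂μ₀ < δ)
    (hui : ∀ ε : ℝ, 0 < ε → ∃ R : ℝ, ∀ n,
      ∫ x in {x | R < |f n x|}, |f n x| ∂μ₀ < ε)
    (hconv : ∀ F : E → ℝ, Continuous F → (∃ M : ℝ, ∀ x, |F x| ≤ M) →
      Tendsto (fun n => ∫ x, F x * f n x ∂μ₀) atTop (nhds (∫ x, F x * f₀ x ∂μ₀))) :
    ∀ F : E → ℝ, Measurable F → (∃ M : ℝ, ∀ x, |F x| ≤ M) →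
      Tendsto (fun n => ∫ x, F x * f n x ∂μ₀) atTop (nhds (∫ x, F x * f₀ x ∂μ₀)) := by
  rintro F hFm ⟨M₀, hM₀⟩
  set M : ℝ := max M₀ 1 with hMdef
  have hMpos : (0:ℝ) < M := lt_of_lt_of_le one_pos (le_max_right _ _)
  have hFb : ∀ x, |F x| ≤ M := fun x => (hM₀ x).trans (le_max_left _ _)
  have hFi : Integrable F μ₀ := by
    refine Integrable.mono' (integrable_const M) hFm.aestronglyMeasurable ?_
    filter_upwards with x; simpa [Real.norm_eq_abs] using hFb x
  rw [Metric.tendsto_atTop]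
  intro ε hε
  have hε16 : 0 < ε / (16 * M) := by positivity
  obtain ⟨R₁, hR₁⟩ := hui (ε / (16 * M)) hε16
  obtain ⟨R₀, hR₀⟩ := tail_small μ₀ f₀ hf₀ hε16
  set R : ℝ := max (max R₁ R₀) 0 with hRdef
  have hRnn : (0:ℝ) ≤ R := le_max_right _ _
  have hR₁R : R₁ ≤ R := (le_max_left R₁ R₀).trans (le_max_left _ _)
  have hR₀R : R₀ ≤ R := (le_max_right R₁ R₀).trans (le_max_left _ _)
  have htail : ∀ n, ∫ x in {x | R < |f n x|}, |f n x| ∂μ₀ ≤ ε / (16 * M) := by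
    intro n
    refine le_of_lt (lt_of_le_of_lt ?_ (hR₁ n))
    refine setIntegral_mono_set ((hf n).abs.integrableOn) ?_ ?_
    · exact ae_of_all _ fun x => abs_nonneg _
    · exact HasSubset.Subset.eventuallyLE fun x hx => lt_of_le_of_lt hR₁R hx
  have htail₀ : ∫ x in {x | R < |f₀ x|}, |f₀ x| ∂μ₀ ≤ ε / (16 * M) := by
    refine le_of_lt (lt_of_le_of_lt ?_ hR₀)
    refine setIntegral_mono_set (hf₀.abs.integrableOn) ?_ ?_
    · exact ae_of_all _ fun x => abs_nonneg _
    · exact HasSubset.Subset.eventuallyLE fun x hx => lt_of_le_of_lt hR₀R hx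
  set δ : ℝ := ε / (8 * (R + 1)) with hδdef
  have hδ : 0 < δ := by positivity
  obtain ⟨G, hGc, ⟨MG, hMG⟩, hGF⟩ := hdense F hFi δ hδ
  set G' : E → ℝ := fun x => max (min (G x) M) (-M) with hG'def
  have hG'c : Continuous G' := (hGc.min continuous_const).max continuous_const
  have hG'b : ∀ x, |G' x| ≤ M := by
    intro x
    rw [abs_le]
    exact ⟨le_max_right _ _, max_le (min_le_right _ _) (by linarith)⟩
  have hG'i : Integrable G' μ₀ := by
    refine Integrable.mono' (integrable_const M) hG'c.aestronglyMeasurable ?_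
    filter_upwards with x; simpa [Real.norm_eq_abs] using hG'b x
  have hGi : Integrable G μ₀ := by
    refine Integrable.mono' (integrable_const MG) hGc.aestronglyMeasurable ?_
    filter_upwards with x; simpa [Real.norm_eq_abs] using hMG x
  have hclampF : ∀ x, F x = max (min (F x) M) (-M) := by
    intro x
    have h1 := abs_le.1 (hFb x)
    rw [min_eq_left h1.2, max_eq_left h1.1]
  have hG'F : ∀ x, |G' x - F x| ≤ |G x - F x| := by
    intro x
    calc |G' x - F x| = |max (min (G x) M) (-M) - max (min (F x) M) (-M)| := by
          rw [← hclampF x]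
      _ ≤ |min (G x) M - min (F x) M| := abs_max_sub_max_le_abs _ _ _
      _ ≤ |G x - F x| := abs_min_sub_min_le_abs' _ _ _
  have hG'Fd : ∫ x, |F x - G' x| ∂μ₀ ≤ δ := by
    have e : ∫ x, |F x - G' x| ∂μ₀ = ∫ x, |G' x - F x| ∂μ₀ :=
      integral_congr_ae (ae_of_all _ fun x => abs_sub_comm _ _)
    rw [e]
    refine le_of_lt (lt_of_le_of_lt ?_ hGF)
    exact integral_mono ((hG'i.sub hFi).abs) ((hGi.sub hFi).abs) fun x => hG'F x
  have hFG'b : ∀ x, |F x - G' x| ≤ 2 * M := by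
    intro x
    calc |F x - G' x| ≤ |F x| + |G' x| := abs_sub _ _
      _ ≤ 2 * M := by linarith [hFb x, hG'b x]
  -- generic term bound
  have hterm : ∀ h : E → ℝ, Integrable h μ₀ →
      (∫ x in {x | R < |h x|}, |h x| ∂μ₀ ≤ ε / (16 * M)) →
      |∫ x, F x * h x ∂μ₀ - ∫ x, G' x * h x ∂μ₀| ≤ ε / 4 := by
    intro h hhi hht
    have hFh : Integrable (fun x => F x * h x) μ₀ :=
      hhi.bdd_mul hFi.1 (c := M) (ae_of_all _ (by simpa [Real.norm_eq_abs] using hFb))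
    have hG'h : Integrable (fun x => G' x * h x) μ₀ :=
      hhi.bdd_mul hG'i.1 (c := M) (ae_of_all _ (by simpa [Real.norm_eq_abs] using hG'b))
    rw [← integral_sub hFh hG'h]
    have step1 : |∫ x, (F x * h x - G' x * h x) ∂μ₀| ≤ ∫ x, |(F x - G' x) * h x| ∂μ₀ := by
      calc |∫ x, (F x * h x - G' x * h x) ∂μ₀| ≤ ∫ x, |F x * h x - G' x * h x| ∂μ₀ := by
            simpa [Real.norm_eq_abs] using
              norm_integral_le_integral_norm (fun x => F x * h x - G' x * h x) (μ := μ₀)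
        _ = ∫ x, |(F x - G' x) * h x| ∂μ₀ :=
            integral_congr_ae (ae_of_all _ fun x => by show |F x * h x - G' x * h x| = |(F x - G' x) * h x|; rw [sub_mul])
    refine step1.trans ?_
    have step2 := key_bound μ₀ (fun x => F x - G' x) h (hFi.sub hG'i) hhi (2*M) R
      (by positivity) hRnn hFG'b
    refine step2.trans ?_
    have b1 : R * ∫ x, |F x - G' x| ∂μ₀ ≤ ε / 8 := by
      have : R * ∫ x, |F x - G' x| ∂μ₀ ≤ R * δ := by
        refine mul_le_mul_of_nonneg_left hG'Fd hRnn
      refine this.trans ?_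
      rw [hδdef]
      rw [(by ring : R * (ε / (8 * (R + 1))) = (R * ε) / (8 * (R + 1))),
        div_le_div_iff₀ (by positivity) (by norm_num : (0:ℝ) < 8)]
      nlinarith
    have b2 : 2 * M * ∫ x in {x | R < |h x|}, |h x| ∂μ₀ ≤ ε / 8 := by
      have : 2 * M * ∫ x in {x | R < |h x|}, |h x| ∂μ₀ ≤ 2 * M * (ε / (16 * M)) :=
        mul_le_mul_of_nonneg_left hht (by positivity)
      refine this.trans (le_of_eq ?_)
      field_simp
      ring
    linarith
  obtain ⟨N, hN⟩ := Metric.tendsto_atTop.1 (hconv G' hG'c ⟨M, hG'b⟩) (ε / 4) (by positivity)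
  refine ⟨N, fun n hn => ?_⟩
  have h2 := hN n hn
  rw [Real.dist_eq] at h2 ⊢
  have t1 := hterm (f n) (hf n) (htail n)
  have t0 := hterm f₀ hf₀ htail₀
  calc |∫ x, F x * f n x ∂μ₀ - ∫ x, F x * f₀ x ∂μ₀|
      ≤ |∫ x, F x * f n x ∂μ₀ - ∫ x, G' x * f n x ∂μ₀|
        + |∫ x, G' x * f n x ∂μ₀ - ∫ x, G' x * f₀ x ∂μ₀|
        + |∫ x, G' x * f₀ x ∂μ₀ - ∫ x, F x * f₀ x ∂μ₀| := by
        have := abs_sub_le (∫ x, F x * f n x ∂μ₀) (∫ x, G' x * f n x ∂μ₀) (∫ x, F x * f₀ x ∂μ₀)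
        have := abs_sub_le (∫ x, G' x * f n x ∂μ₀) (∫ x, G' x * f₀ x ∂μ₀) (∫ x, F x * f₀ x ∂μ₀)
        linarith
    _ < ε := by
        rw [abs_sub_comm (∫ x, G' x * f₀ x ∂μ₀)] 
        linarith
end

section
/- Let (E, 𝔪) be a measure space and Φ₀ : E → [0,∞) an 𝔪-integrable function. For each ε ∈ (0,1) let T_ε : E → E be measurable and Φ_ε : E → [0,∞) be measurable, and assume that the pushforward under T_ε of the measure Φ₀·𝔪 (the measure with density Φ₀ with respect to 𝔪) equals the measure Φ_ε·𝔪. Suppose there exists a measurable function η : E → [0,∞] with Φ_ε(T_ε(x)) ≤ η(x) for every ε ∈ (0,1) and every x ∈ E, and with η < ∞ (Φ₀·𝔪)-almost everywhere. Then the family (Φ_ε)_{ε∈(0,1)} is uniformly integrable with respect to 𝔪: sup_{ε∈(0,1)} ∫_{{Φ_ε > R}} Φ_ε d𝔪 → 0 as R → ∞. -/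
open MeasureTheory
open scoped NNReal ENNReal

/-- If for each `ε ∈ (0,1)` the pushforward of `Φ₀ • 𝔪` under `T ε` is `Φ ε • 𝔪`, and
`Φ ε ∘ T ε` is dominated by a function `η` which is finite `(Φ₀ • 𝔪)`-a.e., then the family
`(Φ ε)` is uniformly integrable w.r.t. `𝔪`. -/
theorem stmt1 {E : Type*} [MeasurableSpace E] (m : Measure E)
    (Φ₀ : E → ℝ≥0) (hΦ₀ : Measurable Φ₀)
    (hΦ₀int : ∫⁻ x, (Φ₀ x : ℝ≥0∞) ∂m < ⊤)
    (T : ℝ → E → E) (Φ : ℝ → E → ℝ≥0)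
    (hT : ∀ ε ∈ Set.Ioo (0 : ℝ) 1, Measurable (T ε))
    (hΦ : ∀ ε ∈ Set.Ioo (0 : ℝ) 1, Measurable (Φ ε))
    (hpush : ∀ ε ∈ Set.Ioo (0 : ℝ) 1,
      Measure.map (T ε) (m.withDensity fun x => (Φ₀ x : ℝ≥0∞))
        = m.withDensity fun x => (Φ ε x : ℝ≥0∞))
    (η : E → ℝ≥0∞) (hη : Measurable η)
    (hdom : ∀ ε ∈ Set.Ioo (0 : ℝ) 1, ∀ x : E, (Φ ε (T ε x) : ℝ≥0∞) ≤ η x)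
    (hfin : ∀ᵐ x ∂(m.withDensity fun x => (Φ₀ x : ℝ≥0∞)), η x < ⊤) :
    ∀ δ : ℝ≥0∞, 0 < δ → ∃ R : ℝ≥0, ∀ ε ∈ Set.Ioo (0 : ℝ) 1,
      ∫⁻ x in {x | R < Φ ε x}, (Φ ε x : ℝ≥0∞) ∂m < δ := by
  intro δ hδ
  set ν := m.withDensity fun x => (Φ₀ x : ℝ≥0∞) with hνdef
  have hνfin : ν Set.univ ≠ ⊤ := by
    rw [hνdef, withDensity_apply _ MeasurableSet.univ, Measure.restrict_univ]
    exact hΦ₀int.ne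
  set A : ℕ → Set E := fun n => {x | (n : ℝ≥0∞) < η x} with hA
  have hAmeas : ∀ n, MeasurableSet (A n) := fun n => measurableSet_lt measurable_const hη
  have hAanti : Antitone A := by
    intro a b hab x hx
    exact lt_of_le_of_lt (α := ℝ≥0∞) (Nat.cast_le.mpr hab) hx
  have hInter : ⋂ n, A n = {x | η x = ⊤} := by
    ext x
    simp only [Set.mem_iInter, hA, Set.mem_setOf_eq]
    constructor
    · intro h
      by_contra hne
      obtain ⟨n, hn⟩ := ENNReal.exists_nat_gt hne
      exact absurd (h n) (not_lt.2 hn.le)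
    · intro h n
      rw [h]
      exact ENNReal.natCast_lt_top n
  have hν0 : ν {x | η x = ⊤} = 0 := by
    have : ∀ᵐ x ∂ν, η x < ⊤ := hfin
    rw [MeasureTheory.ae_iff] at this
    simpa [not_lt, top_le_iff] using this
  have htend : Filter.Tendsto (fun n => ν (A n)) Filter.atTop (nhds 0) := by
    have := MeasureTheory.tendsto_measure_iInter_atTop
      (fun n => (hAmeas n).nullMeasurableSet) hAanti ⟨0, ne_top_of_le_ne_top hνfin (measure_mono (Set.subset_univ _))⟩
    rwa [hInter, hν0] at this
  obtain ⟨n, hn⟩ := (htend.eventually_lt_const hδ).exists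
  refine ⟨(n : ℝ≥0), fun ε hε => ?_⟩
  have hSmeas : MeasurableSet {x | ((n : ℝ≥0) : ℝ≥0) < Φ ε x} :=
    measurableSet_lt measurable_const (hΦ ε hε)
  calc ∫⁻ x in {x | (n : ℝ≥0) < Φ ε x}, (Φ ε x : ℝ≥0∞) ∂m
      = (m.withDensity fun x => (Φ ε x : ℝ≥0∞)) {x | (n : ℝ≥0) < Φ ε x} :=
        (withDensity_apply _ hSmeas).symm
    _ = ν (T ε ⁻¹' {x | (n : ℝ≥0) < Φ ε x}) := by
        rw [← hpush ε hε, Measure.map_apply (hT ε hε) hSmeas]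
    _ ≤ ν (A n) := by
        refine measure_mono fun x hx => ?_
        have h1 : ((n : ℝ≥0∞)) < (Φ ε (T ε x) : ℝ≥0∞) := by
          have : (n : ℝ≥0) < Φ ε (T ε x) := hx
          exact_mod_cast this
        exact lt_of_lt_of_le h1 (hdom ε hε x)
    _ < δ := hn
end

section
/- For every measurable g : S → ℝ and every measurable f : S × ℝ → [0,∞], one has E[ Σ_{0 ≤ i < N} f(ξ_i, Σ_{0 ≤ j < N, j ≠ i} g(ξ_j)) ] = λ · E[ f(ξ_N, Σ_{0 ≤ j < N} g(ξ_j)) ], as an identity in [0,∞]. -/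
open MeasureTheory ProbabilityTheory
open scoped ENNReal

universe u v

/-- The codomain family for the joint family `(N, ξ₀, ξ₁, …)`: the index `none` corresponds
to the `ℕ`-valued variable `N` and `some i` to the `S`-valued mark `ξ i`. -/
def stmt3Fam (S : Type u) : Option ℕ → Type u
  | none => ULift ℕ
  | some _ => S

/-- The measurable structure on each member of the family. -/
def stmt3FamMS (S : Type u) [MeasurableSpace S] :
    ∀ o : Option ℕ, MeasurableSpace (stmt3Fam S o)
  | none => inferInstanceAs (MeasurableSpace (ULift ℕ))
  | some _ => inferInstanceAs (MeasurableSpace S)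

/-- The joint family `(N, ξ₀, ξ₁, …)` as a dependent family of random variables. -/
def stmt3FamFun {Ω : Type v} {S : Type u} (N : Ω → ℕ) (ξ : ℕ → Ω → S) :
    ∀ o : Option ℕ, Ω → stmt3Fam S o
  | none => fun ω => ULift.up (N ω)
  | some i => ξ i

section aux

variable {Ω : Type v} {S : Type u} [MeasurableSpace Ω] [MeasurableSpace S]

lemma stmt3_measFam {N : Ω → ℕ} {ξ : ℕ → Ω → S} (hN : Measurable N)
    (hξ : ∀ i, Measurable (ξ i)) :
    ∀ o, @Measurable Ω (stmt3Fam S o) _ (stmt3FamMS S o) (stmt3FamFun N ξ o) := by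
  rintro (_ | i)
  · exact measurable_up.comp hN
  · exact hξ i

lemma stmt3_map_tuple {P : Measure Ω} [IsProbabilityMeasure P]
    {N : Ω → ℕ} {ξ : ℕ → Ω → S} (hξ : ∀ i, Measurable (ξ i))
    {π : Measure S} [IsProbabilityMeasure π]
    (hdist : ∀ i, Measure.map (ξ i) P = π)
    (hindep : iIndepFun (m := stmt3FamMS S) (stmt3FamFun N ξ) P) (m : ℕ) :
    Measure.map (fun ω (i : Fin m) => ξ i ω) P = Measure.pi (fun _ : Fin m => π) := by
  classical
  have hmeas : Measurable (fun ω (i : Fin m) => ξ i ω) :=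
    measurable_pi_lambda _ fun i => hξ i
  refine (Measure.pi_eq fun s hs => ?_).symm
  rw [Measure.map_apply hmeas (MeasurableSet.univ_pi hs)]
  set s' : ℕ → Set S := fun j => if h : j < m then s ⟨j, h⟩ else Set.univ with hs'def
  have hs'meas : ∀ j, MeasurableSet (s' j) := by
    intro j
    by_cases h : j < m <;> simp [hs'def, h, hs]
  set E : Option ℕ → Set Ω := fun o => Option.rec Set.univ (fun j => ξ j ⁻¹' s' j) o with hEdef
  have hpre : (fun ω (i : Fin m) => ξ i ω) ⁻¹' Set.pi Set.univ s
      = ⋂ o ∈ (Finset.range m).image some, E o := by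
    ext ω
    simp only [Set.mem_preimage, Set.mem_pi, Set.mem_univ, true_implies, Set.mem_iInter,
      Finset.mem_image, Finset.mem_range, forall_exists_index, and_imp]
    constructor
    · rintro h o j hj rfl
      have := h ⟨j, hj⟩
      simpa [hEdef, hs'def, hj] using this
    · intro h i
      have := h (some i) i i.isLt rfl
      simpa [hEdef, hs'def, i.isLt] using this
  rw [hpre, hindep.meas_biInter (S := (Finset.range m).image some) ?_]
  · rw [Finset.prod_image (by simp)]
    have hterm : ∀ j ∈ Finset.range m, P (E (some j)) = π (s' j) := by
      intro j _
      rw [← hdist j, Measure.map_apply (hξ j) (hs'meas j)]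
    rw [Finset.prod_congr rfl hterm, ← Fin.prod_univ_eq_prod_range (fun j => π (s' j)) m]
    exact Finset.prod_congr rfl fun i _ => by simp [hs'def, i.isLt]
  · rintro (_ | j) ho
    · simp at ho
    · exact ⟨s' j, hs'meas j, rfl⟩

lemma stmt3_indep_tuple {P : Measure Ω} [IsProbabilityMeasure P]
    {N : Ω → ℕ} {ξ : ℕ → Ω → S} (hN : Measurable N) (hξ : ∀ i, Measurable (ξ i))
    (hindep : iIndepFun (m := stmt3FamMS S) (stmt3FamFun N ξ) P) (m : ℕ) :
    IndepFun N (fun ω (i : Fin m) => ξ i ω) P := by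
  classical
  letI : ∀ o, MeasurableSpace (stmt3Fam S o) := stmt3FamMS S
  have h := hindep.indepFun_finset {none} ((Finset.range m).image some)
    (by simp) (stmt3_measFam hN hξ)
  have hφ : Measurable (fun v : (∀ i : ({none} : Finset (Option ℕ)), stmt3Fam S i) =>
      (v ⟨none, Finset.mem_singleton_self none⟩).down) :=
    measurable_down.comp (measurable_pi_apply _)
  have hψ : Measurable (fun v : (∀ i : (((Finset.range m).image some : Finset (Option ℕ)) : Type),
        stmt3Fam S i) =>
      (fun i : Fin m =>
        v ⟨some i, Finset.mem_image_of_mem some (Finset.mem_range.2 i.isLt)⟩ : Fin m → S)) :=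
    measurable_pi_lambda _ fun i => measurable_pi_apply _
  exact h.comp hφ hψ

lemma stmt3_cond {P : Measure Ω} [IsProbabilityMeasure P]
    {N : Ω → ℕ} {ξ : ℕ → Ω → S} (hNmeas : Measurable N) (hξ : ∀ i, Measurable (ξ i))
    {π : Measure S} [IsProbabilityMeasure π]
    (hdist : ∀ i, Measure.map (ξ i) P = π)
    (hindep : iIndepFun (m := stmt3FamMS S) (stmt3FamFun N ξ) P)
    (n m : ℕ) (H : (Fin m → S) → ℝ≥0∞) (hH : Measurable H) :
    ∫⁻ ω in {ω | N ω = n}, H (fun i => ξ i ω) ∂P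
      = P {ω | N ω = n} * ∫⁻ x, H x ∂(Measure.pi fun _ : Fin m => π) := by
  classical
  have hmeasT : Measurable (fun ω (i : Fin m) => ξ i ω) :=
    measurable_pi_lambda _ fun i => hξ i
  have hset : MeasurableSet {ω | N ω = n} := hNmeas (measurableSet_singleton n)
  set χ : ℕ → ℝ≥0∞ := fun k => if k = n then 1 else 0 with hχdef
  have hχ : Measurable χ := measurable_from_top
  have h1 : ∫⁻ ω in {ω | N ω = n}, H (fun i => ξ i ω) ∂P
      = ∫⁻ ω, ((χ ∘ N) * (H ∘ fun ω (i : Fin m) => ξ i ω)) ω ∂P := by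
    rw [← lintegral_indicator hset]
    refine lintegral_congr fun ω => ?_
    by_cases h : N ω = n
    · simp [Set.indicator_apply, h, hχdef, Function.comp]
    · simp [Set.indicator_apply, h, hχdef, Function.comp]
  rw [h1, lintegral_mul_eq_lintegral_mul_lintegral_of_indepFun
    (hχ.comp hNmeas) (hH.comp hmeasT)
    ((stmt3_indep_tuple hNmeas hξ hindep m).comp hχ hH)]
  congr 1
  · have h2 : ∀ ω, (χ ∘ N) ω = Set.indicator {ω | N ω = n} (1 : Ω → ℝ≥0∞) ω := by
      intro ω
      by_cases h : N ω = n <;> simp [Set.indicator_apply, hχdef, h, Function.comp]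
    rw [lintegral_congr h2, lintegral_indicator_one hset]
  · rw [← stmt3_map_tuple hξ hdist hindep m, lintegral_map hH hmeasT]
    rfl

lemma stmt3_map_comp_perm {π : Measure S} [IsProbabilityMeasure π] (m : ℕ)
    (e : Fin m ≃ Fin m) :
    Measure.map (fun x : Fin m → S => x ∘ e) (Measure.pi fun _ : Fin m => π)
      = Measure.pi (fun _ : Fin m => π) := by
  have hmeas : Measurable (fun x : Fin m → S => x ∘ e) :=
    measurable_pi_lambda _ fun j => measurable_pi_apply (e j)
  refine (Measure.pi_eq fun s hs => ?_).symm
  rw [Measure.map_apply hmeas (MeasurableSet.univ_pi hs)]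
  have hpre : (fun x : Fin m → S => x ∘ e) ⁻¹' Set.pi Set.univ s
      = Set.pi Set.univ (fun k => s (e.symm k)) := by
    ext x
    simp only [Set.mem_preimage, Set.mem_pi, Set.mem_univ, true_implies, Function.comp]
    exact ⟨fun h k => by simpa using h (e.symm k), fun h i => by simpa using h (e i)⟩
  rw [hpre, Measure.pi_pi]
  exact Equiv.prod_comp e.symm fun i => π (s i)

end aux

/-- Mecke-type identity for compound Poisson sums: for a Poisson(λ) number `N` of i.i.d. marks
`ξ i` (jointly independent with `N`) with common law `π`,
`E[ Σ_{i<N} f(ξ i, Σ_{j<N, j≠i} g(ξ j)) ] = λ E[ f(ξ N, Σ_{j<N} g(ξ j)) ]`. -/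
theorem stmt3 {Ω : Type v} [MeasurableSpace Ω] (P : Measure Ω) [IsProbabilityMeasure P]
    {S : Type u} [MeasurableSpace S]
    (l : ℝ) (hl : 0 < l)
    (N : Ω → ℕ) (hNmeas : Measurable N)
    (hN : ∀ k : ℕ, P {ω | N ω = k}
      = ENNReal.ofReal (Real.exp (-l) * l ^ k / Nat.factorial k))
    (ξ : ℕ → Ω → S) (hξ : ∀ i, Measurable (ξ i))
    (π : Measure S) [IsProbabilityMeasure π]
    (hdist : ∀ i, Measure.map (ξ i) P = π)
    (hindep : iIndepFun (m := stmt3FamMS S) (stmt3FamFun N ξ) P)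
    (g : S → ℝ) (hg : Measurable g)
    (f : S × ℝ → ℝ≥0∞) (hf : Measurable f) :
    ∫⁻ ω, ∑ i ∈ Finset.range (N ω),
        f (ξ i ω, ∑ j ∈ (Finset.range (N ω)).erase i, g (ξ j ω)) ∂P
      = ENNReal.ofReal l
          * ∫⁻ ω, f (ξ (N ω) ω, ∑ j ∈ Finset.range (N ω), g (ξ j ω)) ∂P := by
  classical
  -- per-index integrand on tuples
  set ψ : ∀ m : ℕ, Fin m → (Fin m → S) → ℝ≥0∞ :=
    fun m i x => f (x i, (∑ j, g (x j)) - g (x i)) with hψdef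
  have hψmeas : ∀ m (i : Fin m), Measurable (ψ m i) := by
    intro m i
    exact hf.comp ((measurable_pi_apply i).prodMk
      ((Finset.measurable_sum Finset.univ fun j _ => hg.comp (measurable_pi_apply j)).sub
        (hg.comp (measurable_pi_apply i))))
  set Hl : ∀ m : ℕ, (Fin m → S) → ℝ≥0∞ := fun m x => ∑ i, ψ m i x with hHldef
  have hHlmeas : ∀ m, Measurable (Hl m) :=
    fun m => Finset.measurable_sum _ fun i _ => hψmeas m i
  set J : ℕ → ℝ≥0∞ :=
    fun m => ∫⁻ x, ψ (m + 1) (Fin.last m) x ∂(Measure.pi fun _ : Fin (m + 1) => π) with hJdef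
  -- all the ψ integrals coincide, by exchangeability
  have hψint : ∀ (m : ℕ) (i : Fin (m + 1)),
      ∫⁻ x, ψ (m + 1) i x ∂(Measure.pi fun _ : Fin (m + 1) => π) = J m := by
    intro m i
    set e : Fin (m + 1) ≃ Fin (m + 1) := Equiv.swap i (Fin.last m) with hedef
    have hce : Measurable (fun x : Fin (m + 1) → S => x ∘ e) :=
      measurable_pi_lambda _ fun j => measurable_pi_apply (e j)
    have step1 : ∫⁻ x, ψ (m + 1) i x ∂(Measure.pi fun _ : Fin (m + 1) => π)
        = ∫⁻ x, ψ (m + 1) (Fin.last m) (x ∘ e) ∂(Measure.pi fun _ : Fin (m + 1) => π) := by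
      refine lintegral_congr fun x => ?_
      have h1 : (x ∘ e) (Fin.last m) = x i := by
        simp [hedef, Equiv.swap_apply_right, Function.comp]
      have h2 : (∑ j, g ((x ∘ e) j)) = ∑ j, g (x j) :=
        Equiv.sum_comp e fun k => g (x k)
      simp only [hψdef, h1, h2]
    rw [step1]
    have hmap := lintegral_map (μ := Measure.pi fun _ : Fin (m + 1) => π)
      (hψmeas (m + 1) (Fin.last m)) hce
    rw [← hmap, stmt3_map_comp_perm (π := π) (m + 1) e]
  -- conditional decomposition infrastructure
  have hmeasSet : ∀ n : ℕ, MeasurableSet {ω | N ω = n} :=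
    fun n => hNmeas (measurableSet_singleton n)
  have hcover : (⋃ n : ℕ, {ω | N ω = n}) = Set.univ := by
    ext ω; simp
  have hdisj : Pairwise (Function.onFun Disjoint fun n : ℕ => {ω | N ω = n}) := by
    intro a b hab
    simp only [Function.onFun, Set.disjoint_left, Set.mem_setOf_eq]
    intro ω ha hb
    exact hab (ha.symm.trans hb)
  have split : ∀ W : Ω → ℝ≥0∞,
      ∫⁻ ω, W ω ∂P = ∑' n : ℕ, ∫⁻ ω in {ω | N ω = n}, W ω ∂P := by
    intro W
    rw [← setLIntegral_univ, ← hcover, lintegral_iUnion hmeasSet hdisj]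
  -- the Poisson relation
  have hp : ∀ m : ℕ, ((m + 1 : ℕ) : ℝ≥0∞) * P {ω | N ω = m + 1}
      = ENNReal.ofReal l * P {ω | N ω = m} := by
    intro m
    rw [hN, hN, ← ENNReal.ofReal_natCast (m + 1),
      ← ENNReal.ofReal_mul (by positivity), ← ENNReal.ofReal_mul hl.le]
    congr 1
    have hfac : (Nat.factorial (m + 1) : ℝ) = ((m : ℝ) + 1) * (Nat.factorial m : ℝ) := by
      rw [Nat.factorial_succ]; push_cast; ring
    have hfacpos : (0 : ℝ) < (Nat.factorial m : ℝ) := by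
      exact_mod_cast Nat.factorial_pos m
    push_cast
    rw [hfac]
    field_simp
    ring
  -- left-hand side
  have hLHS : ∫⁻ ω, ∑ i ∈ Finset.range (N ω),
        f (ξ i ω, ∑ j ∈ (Finset.range (N ω)).erase i, g (ξ j ω)) ∂P
      = ∑' n : ℕ, P {ω | N ω = n} * ∫⁻ x, Hl n x ∂(Measure.pi fun _ : Fin n => π) := by
    rw [split]
    refine tsum_congr fun n => ?_
    have hcongr : ∫⁻ ω in {ω | N ω = n}, (∑ i ∈ Finset.range (N ω),
          f (ξ i ω, ∑ j ∈ (Finset.range (N ω)).erase i, g (ξ j ω))) ∂P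
        = ∫⁻ ω in {ω | N ω = n}, Hl n (fun i => ξ i ω) ∂P := by
      refine setLIntegral_congr_fun (hmeasSet n) ?_
      intro ω (h : N ω = n)
      beta_reduce
      rw [h, hHldef, ← Fin.sum_univ_eq_sum_range
        (fun i => f (ξ i ω, ∑ j ∈ (Finset.range n).erase i, g (ξ j ω))) n]
      refine Finset.sum_congr rfl fun i _ => ?_
      rw [hψdef]
      congr 1
      rw [Finset.sum_erase_eq_sub (Finset.mem_range.2 i.isLt),
        ← Fin.sum_univ_eq_sum_range (fun j => g (ξ j ω)) n]
    rw [hcongr, stmt3_cond hNmeas hξ hdist hindep n n (Hl n) (hHlmeas n)]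
  -- right-hand side
  have hRHS : ∫⁻ ω, f (ξ (N ω) ω, ∑ j ∈ Finset.range (N ω), g (ξ j ω)) ∂P
      = ∑' n : ℕ, P {ω | N ω = n} * J n := by
    rw [split]
    refine tsum_congr fun n => ?_
    have hcongr : ∫⁻ ω in {ω | N ω = n},
          f (ξ (N ω) ω, ∑ j ∈ Finset.range (N ω), g (ξ j ω)) ∂P
        = ∫⁻ ω in {ω | N ω = n},
            ψ (n + 1) (Fin.last n) (fun i : Fin (n + 1) => ξ i ω) ∂P := by
      refine setLIntegral_congr_fun (hmeasSet n) ?_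
      intro ω (h : N ω = n)
      beta_reduce
      have h2 : (∑ j : Fin (n + 1), g (ξ (j : ℕ) ω)) - g (ξ n ω)
          = ∑ j ∈ Finset.range n, g (ξ j ω) := by
        rw [Fin.sum_univ_eq_sum_range (fun j => g (ξ j ω)) (n + 1),
          Finset.sum_range_succ]
        exact add_sub_cancel_right _ _
      rw [h, ← h2]
      simp only [hψdef, Fin.val_last]
    rw [hcongr, stmt3_cond hNmeas hξ hdist hindep n (n + 1)
      (ψ (n + 1) (Fin.last n)) (hψmeas _ _)]
  rw [hLHS, hRHS]
  -- compute the Hl integrals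
  have hHlint : ∀ m : ℕ,
      ∫⁻ x, Hl (m + 1) x ∂(Measure.pi fun _ : Fin (m + 1) => π)
        = ((m + 1 : ℕ) : ℝ≥0∞) * J m := by
    intro m
    rw [hHldef]
    rw [lintegral_finset_sum _ fun i _ => hψmeas (m + 1) i]
    rw [Finset.sum_congr rfl fun i _ => hψint m i, Finset.sum_const,
      Finset.card_univ, Fintype.card_fin, nsmul_eq_mul]
  -- sum manipulation
  rw [tsum_eq_zero_add' ENNReal.summable]
  have hzero : P {ω | N ω = 0} * ∫⁻ x, Hl 0 x ∂(Measure.pi fun _ : Fin 0 => π) = 0 := by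
    have : ∀ x : Fin 0 → S, Hl 0 x = 0 := by
      intro x; rw [hHldef]; simp
    rw [lintegral_congr this, lintegral_zero, mul_zero]
  rw [hzero, zero_add, ← ENNReal.tsum_mul_left]
  refine tsum_congr fun m => ?_
  rw [hHlint m, ← mul_assoc, mul_comm (P {ω | N ω = m + 1}), hp m, mul_assoc]
end

section
/- For every integer m ≥ 1, P( max_{1 ≤ k ≤ m} S_k < 1 ) ≤ 2 · P( S_m ∈ {0, 1} ). -/
open MeasureTheory ProbabilityTheory Finset

namespace Stmt6Aux


/-- extend a Bool vector by `false`. -/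
def bext (m : ℕ) (b : Fin m → Bool) (i : ℕ) : Bool :=
  if h : i < m then b ⟨i, h⟩ else false

/-- number of `true`s among the first `k` coordinates. -/
def T (m k : ℕ) (b : Fin m → Bool) : ℕ :=
  ((Finset.range k).filter (fun i => bext m b i = true)).card

def Acond (m h : ℕ) (b : Fin m → Bool) : Prop :=
  ∀ k, k ≤ m → 2 * T m k b ≤ k + h

instance (m h : ℕ) : DecidablePred (Acond m h) := fun _ =>
  Nat.decidableBallLE m _

def Aset (m h : ℕ) : Finset (Fin m → Bool) := univ.filter (Acond m h)

def G (m h : ℕ) : ℕ := ∑ i ∈ range (h + 1), m.choose ((m + i + 1) / 2)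

lemma f_zero (m : ℕ) : m.choose (m / 2) = m.choose ((m + 1) / 2) := by
  have h1 : m / 2 = m - (m + 1) / 2 := by omega
  rw [h1, Nat.choose_symm (by omega)]

lemma f_pascal (m i : ℕ) :
    (m + 1).choose ((m + 1 + i + 1) / 2)
      = m.choose ((m + i) / 2) + m.choose ((m + (i + 1) + 1) / 2) := by
  have h1 : (m + 1 + i + 1) / 2 = (m + i) / 2 + 1 := by omega
  have h2 : (m + (i + 1) + 1) / 2 = (m + i) / 2 + 1 := by omega
  rw [h1, h2, Nat.choose_succ_succ]

lemma G_zero (m : ℕ) : G (m + 1) 0 = G m 1 := by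
  simp only [G]
  rw [Finset.sum_range_succ, Finset.sum_range_succ, Finset.sum_range_one,
    Finset.sum_range_zero]
  have := f_pascal m 0
  rw [show m + 0 = m from rfl] at this
  rw [this, f_zero]
  ring

lemma G_succ (m h : ℕ) : G (m + 1) (h + 1) = G m (h + 2) + G m h := by
  simp only [G]
  have : ∀ i ∈ range (h + 2), (m + 1).choose ((m + 1 + i + 1) / 2)
      = m.choose ((m + i) / 2) + m.choose ((m + (i + 1) + 1) / 2) :=
    fun i _ => f_pascal m i
  rw [Finset.sum_congr rfl this, Finset.sum_add_distrib]
  have e1 : ∑ i ∈ range (h + 2), m.choose ((m + i) / 2)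
      = m.choose ((m + 1) / 2) + ∑ i ∈ range (h + 1), m.choose ((m + i + 1) / 2) := by
    rw [Finset.sum_range_succ'] -- ∑_{range (h+2)} g = ∑_{range(h+1)} g (i+1) + g 0
    have h1 : ∀ i ∈ range (h + 1), m.choose ((m + (i + 1)) / 2) = m.choose ((m + i + 1) / 2) := by
      intro i _; congr 1
    have h2 : m.choose ((m + 0) / 2) = m.choose ((m + 1) / 2) := by
      rw [show (m + 0) / 2 = m / 2 by omega, f_zero]
    rw [Finset.sum_congr rfl h1, h2]
    ring
  have e2 : ∑ i ∈ range (h + 3), m.choose ((m + i + 1) / 2)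
      = m.choose ((m + 1) / 2) + ∑ i ∈ range (h + 2), m.choose ((m + (i + 1) + 1) / 2) := by
    rw [Finset.sum_range_succ']
    rw [show m.choose ((m + 0 + 1) / 2) = m.choose ((m + 1) / 2) from rfl]
    ring
  rw [e1, e2]
  ring

lemma bext_cons_zero (m : ℕ) (e : Bool) (c : Fin m → Bool) :
    bext (m + 1) (Fin.cons e c) 0 = e := by
  simp [bext]

lemma bext_cons_succ (m : ℕ) (e : Bool) (c : Fin m → Bool) (i : ℕ) :
    bext (m + 1) (Fin.cons e c) (i + 1) = bext m c i := by
  unfold bext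
  by_cases h : i < m
  · rw [dif_pos (by omega : i + 1 < m + 1), dif_pos h]
    exact Fin.cons_succ (α := fun _ : Fin (m + 1) => Bool) e c ⟨i, h⟩
  · rw [dif_neg (by omega), dif_neg h]

lemma T_zero (m : ℕ) (b : Fin m → Bool) : T m 0 b = 0 := by simp [T]

lemma T_cons_succ (m k : ℕ) (e : Bool) (c : Fin m → Bool) :
    T (m + 1) (k + 1) (Fin.cons e c) = e.toNat + T m k c := by
  simp only [T, Finset.card_filter]
  rw [Finset.sum_range_succ']
  simp only [bext_cons_succ, bext_cons_zero]
  cases e <;> simp <;> ring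

lemma Acond_cons_false (m h : ℕ) (c : Fin m → Bool) :
    Acond (m + 1) h (Fin.cons false c) ↔ Acond m (h + 1) c := by
  have ht : Bool.toNat false = 0 := rfl
  constructor
  · intro H k hk
    have h1 := H (k + 1) (by omega)
    rw [T_cons_succ, ht] at h1
    omega
  · intro H k hk
    match k with
    | 0 => simp [T_zero]
    | j + 1 =>
      rw [T_cons_succ, ht]
      have := H j (by omega)
      omega

lemma Acond_cons_true (m h : ℕ) (c : Fin m → Bool) :
    Acond (m + 1) (h + 1) (Fin.cons true c) ↔ Acond m h c := by
  have ht : Bool.toNat true = 1 := rfl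
  constructor
  · intro H k hk
    have h1 := H (k + 1) (by omega)
    rw [T_cons_succ, ht] at h1
    omega
  · intro H k hk
    match k with
    | 0 => simp [T_zero]
    | j + 1 =>
      rw [T_cons_succ, ht]
      have := H j (by omega)
      omega

lemma Acond_cons_true_zero (m : ℕ) (c : Fin m → Bool) :
    ¬ Acond (m + 1) 0 (Fin.cons true c) := by
  intro H
  have h1 := H 1 (by omega)
  rw [T_cons_succ] at h1
  simp [T_zero] at h1

lemma card_filter_cons (m : ℕ) (p : (Fin (m + 1) → Bool) → Prop) [DecidablePred p] :
    (univ.filter p).card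
      = (univ.filter (fun c => p (Fin.cons true c))).card
        + (univ.filter (fun c => p (Fin.cons false c))).card := by
  have h1 : (univ.filter p).card
      = (univ.filter (fun q : Bool × (Fin m → Bool) => p (Fin.cons q.1 q.2))).card := by
    apply Finset.card_nbij' (fun b => (b 0, Fin.tail b)) (fun q => Fin.cons q.1 q.2)
    · intro b hb
      simp only [mem_coe, mem_filter, mem_univ, true_and] at hb ⊢
      rwa [Fin.cons_self_tail]
    · intro q hq
      simp only [mem_filter, mem_univ, true_and] at hq ⊢
      simpa using hq
    · intro b _
      exact Fin.cons_self_tail b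
    · intro q _
      simp
  rw [h1, Finset.card_filter, ← Finset.univ_product_univ, Finset.sum_product,
    Fintype.sum_bool, ← Finset.card_filter, ← Finset.card_filter]

lemma card_Aset (m : ℕ) : ∀ h, (Aset m h).card = G m h := by
  induction m with
  | zero =>
    intro h
    have : Aset 0 h = univ := by
      apply Finset.eq_univ_iff_forall.2
      intro b
      simp only [Aset, mem_filter, mem_univ, true_and]
      intro k hk
      interval_cases k
      simp [T_zero]
    rw [this]
    have hu : (univ : Finset (Fin 0 → Bool)).card = 1 := by
      simp
    rw [hu]
    unfold G
    rw [Finset.sum_eq_single 0]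
    · simp
    · intro i _ hi
      apply Nat.choose_eq_zero_of_lt
      omega
    · simp
  | succ m ih =>
    intro h
    have key := card_filter_cons m (Acond (m + 1) h)
    have : Aset (m + 1) h = univ.filter (Acond (m + 1) h) := rfl
    rw [this, key]
    match h with
    | 0 =>
      have ht : (univ.filter (fun c : Fin m → Bool => Acond (m + 1) 0 (Fin.cons true c))) = ∅ := by
        apply Finset.filter_eq_empty_iff.2
        intro c _
        exact Acond_cons_true_zero m c
      rw [ht]
      simp only [Finset.card_empty, Nat.zero_add]
      have hf : (univ.filter (fun c : Fin m → Bool => Acond (m + 1) 0 (Fin.cons false c)))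
          = Aset m 1 := by
        apply Finset.filter_congr
        intro c _
        simp [Acond_cons_false]
      rw [hf, ih 1, G_zero]
    | h' + 1 =>
      have ht : (univ.filter (fun c : Fin m → Bool => Acond (m + 1) (h' + 1) (Fin.cons true c)))
          = Aset m h' := by
        apply Finset.filter_congr
        intro c _
        simp [Acond_cons_true]
      have hf : (univ.filter (fun c : Fin m → Bool => Acond (m + 1) (h' + 1) (Fin.cons false c)))
          = Aset m (h' + 2) := by
        apply Finset.filter_congr
        intro c _
        simp [Acond_cons_false]
      rw [ht, hf, ih h', ih (h' + 2), G_succ]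
      ring

lemma T_top (m : ℕ) (b : Fin m → Bool) :
    T m m b = (univ.filter (fun i : Fin m => b i = true)).card := by
  unfold T
  rw [show (Finset.range m).filter (fun i => bext m b i = true)
      = (univ.filter (fun i : Fin m => b i = true)).image Fin.val from ?_]
  · rw [Finset.card_image_of_injective _ Fin.val_injective]
  · ext j
    simp only [mem_filter, mem_range, mem_image, mem_univ, true_and]
    constructor
    · rintro ⟨hj, hb⟩
      refine ⟨⟨j, hj⟩, ?_, rfl⟩
      unfold bext at hb
      rwa [dif_pos hj] at hb
    · rintro ⟨i, hi, rfl⟩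
      refine ⟨i.isLt, ?_⟩
      unfold bext
      rw [dif_pos i.isLt]
      simpa using hi

lemma card_fixed_trues (m r : ℕ) :
    (univ.filter (fun b : Fin m → Bool => (univ.filter (fun i => b i = true)).card = r)).card
      = m.choose r := by
  have hp : (Finset.powersetCard r (univ : Finset (Fin m))).card = m.choose r := by
    rw [Finset.card_powersetCard, Finset.card_univ, Fintype.card_fin]
  rw [← hp]
  apply Finset.card_bij (fun b _ => univ.filter (fun i => b i = true))
  · intro b hb
    simp only [mem_filter, mem_univ, true_and] at hb
    rw [Finset.mem_powersetCard]
    exact ⟨Finset.subset_univ _, hb⟩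
  · intro b1 h1 b2 h2 heq
    funext i
    have := Finset.ext_iff.1 heq i
    simp only [mem_filter, mem_univ, true_and] at this
    cases hb1 : b1 i <;> cases hb2 : b2 i <;> simp_all
  · intro s hs
    rw [Finset.mem_powersetCard] at hs
    refine ⟨fun i => decide (i ∈ s), ?_, ?_⟩
    · simp only [mem_filter, mem_univ, true_and]
      rw [← hs.2]
      congr 1
      ext i
      simp
    · ext i
      simp

def Bset (m : ℕ) : Finset (Fin m → Bool) :=
  univ.filter (fun b => T m m b = (m + 1) / 2)

lemma card_Bset (m : ℕ) : (Bset m).card = m.choose ((m + 1) / 2) := by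
  unfold Bset
  have hs : (univ.filter (fun b : Fin m → Bool => T m m b = (m + 1) / 2))
      = univ.filter (fun b : Fin m → Bool =>
          (univ.filter (fun i => b i = true)).card = (m + 1) / 2) := by
    ext b
    simp [T_top]
  rw [hs, card_fixed_trues]

lemma cards_eq (m : ℕ) : (Aset m 0).card = (Bset m).card := by
  rw [card_Aset, card_Bset]
  unfold G
  rw [Finset.sum_range_one]


/-- step value of a Bool. -/
def vB (e : Bool) : ℝ := if e then 1 else -1

/-- the atom of sign pattern `b`. -/
def Eset {Ω : Type*} (m : ℕ) (X : ℕ → Ω → ℝ) (b : Fin m → Bool) : Set Ω :=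
  ⋂ i ∈ Finset.range m, {ω | X i ω = vB (bext m b i)}

lemma mem_Eset_iff {Ω : Type*} {m : ℕ} {X : ℕ → Ω → ℝ} {b : Fin m → Bool} {ω : Ω} :
    ω ∈ Eset m X b ↔ ∀ i < m, X i ω = vB (bext m b i) := by
  simp [Eset]

end Stmt6Aux

open Stmt6Aux

/-- For the symmetric simple random walk `S k = X 0 + ⋯ + X (k-1)` with i.i.d. `±1` steps,
`P(max_{1 ≤ k ≤ m} S k < 1) ≤ 2 P(S m ∈ {0, 1})` for every `m ≥ 1`. -/
theorem stmt6 {Ω : Type*} [MeasurableSpace Ω] (P : Measure Ω) [IsProbabilityMeasure P]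
    (X : ℕ → Ω → ℝ) (hmeas : ∀ i, Measurable (X i))
    (hval : ∀ i, ∀ ω, X i ω = 1 ∨ X i ω = -1)
    (hup : ∀ i, P {ω | X i ω = 1} = ENNReal.ofReal (1 / 2))
    (hdown : ∀ i, P {ω | X i ω = -1} = ENNReal.ofReal (1 / 2))
    (hindep : iIndepFun X P)
    (S : ℕ → Ω → ℝ) (hS : ∀ k ω, S k ω = ∑ i ∈ Finset.range k, X i ω)
    (m : ℕ) (hm : 1 ≤ m) :
    P {ω | ∀ k, 1 ≤ k → k ≤ m → S k ω < 1}
      ≤ 2 * P {ω | S m ω = 0 ∨ S m ω = 1} := by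
  classical
  -- measurability of atoms
  have hEmeas : ∀ b : Fin m → Bool, MeasurableSet (Eset m X b) := by
    intro b
    apply MeasurableSet.biInter (Finset.range m).countable_toSet
    intro i _
    exact hmeas i (measurableSet_singleton _)
  have half : ENNReal.ofReal (1 / 2) = 2⁻¹ := by
    rw [ENNReal.ofReal_div_of_pos (by norm_num)]
    norm_num
  have hXv : ∀ i (e : Bool), P (X i ⁻¹' {vB e}) = 2⁻¹ := by
    intro i e
    cases e
    · simpa [vB, Set.preimage, Set.mem_singleton_iff] using (hdown i).trans half
    · simpa [vB, Set.preimage, Set.mem_singleton_iff] using (hup i).trans half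
  -- probability of each atom
  have hEP : ∀ b : Fin m → Bool, P (Eset m X b) = 2⁻¹ ^ m := by
    intro b
    have h0 : P (Eset m X b) = ∏ i ∈ Finset.range m, P (X i ⁻¹' {vB (bext m b i)}) :=
      hindep.meas_biInter (fun i _ => ⟨{vB (bext m b i)}, measurableSet_singleton _, rfl⟩)
    rw [h0, Finset.prod_congr rfl (fun i _ => hXv i _), Finset.prod_const, Finset.card_range]
  -- every ω lies in the atom of its pattern
  have hpat : ∀ ω : Ω, ω ∈ Eset m X (fun i : Fin m => decide (X i ω = 1)) := by
    intro ω
    rw [mem_Eset_iff]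
    intro i hi
    rw [bext, dif_pos hi]
    rcases hval i ω with h | h
    · rw [decide_eq_true h, h]
      simp [vB]
    · have hne : ¬ (X i ω = 1) := by rw [h]; norm_num
      rw [decide_eq_false hne, h]
      simp [vB]
  -- value of S on an atom
  have hSsum : ∀ (b : Fin m → Bool) (ω : Ω), ω ∈ Eset m X b →
      ∀ k, k ≤ m → S k ω = 2 * (T m k b : ℝ) - k := by
    intro b ω hω k hk
    rw [hS]
    have h1 : ∀ i ∈ Finset.range k, X i ω = vB (bext m b i) := by
      intro i hi
      exact mem_Eset_iff.1 hω i (lt_of_lt_of_le (Finset.mem_range.1 hi) hk)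
    rw [Finset.sum_congr rfl h1]
    have h2 : ∀ i ∈ Finset.range k,
        vB (bext m b i) = 2 * (if bext m b i = true then (1 : ℝ) else 0) - 1 := by
      intro i _
      cases hbi : bext m b i <;> simp [vB] <;> norm_num
    rw [Finset.sum_congr rfl h2, Finset.sum_sub_distrib, ← Finset.mul_sum,
      Finset.sum_boole, Finset.sum_const, Finset.card_range]
    simp [T]
  -- decomposition of the two events
  have hAeq : {ω | ∀ k, 1 ≤ k → k ≤ m → S k ω < 1} = ⋃ b ∈ Aset m 0, Eset m X b := by
    ext ω
    simp only [Set.mem_setOf_eq, Set.mem_iUnion, exists_prop]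
    constructor
    · intro hω
      refine ⟨fun i : Fin m => decide (X i ω = 1), ?_, hpat ω⟩
      rw [Aset, Finset.mem_filter]
      refine ⟨Finset.mem_univ _, ?_⟩
      intro k hk
      match k with
      | 0 => simp [T_zero]
      | j + 1 =>
        have hlt := hω (j + 1) (by omega) hk
        rw [hSsum _ ω (hpat ω) (j + 1) hk] at hlt
        have : 2 * (T m (j + 1) (fun i : Fin m => decide (X i ω = 1)) : ℝ) < (j + 1) + 1 := by
          push_cast at hlt ⊢
          linarith
        have : 2 * T m (j + 1) (fun i : Fin m => decide (X i ω = 1)) < j + 1 + 1 := by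
          exact_mod_cast this
        omega
    · rintro ⟨b, hb, hω⟩ k hk1 hk2
      rw [hSsum b ω hω k hk2]
      have hA := (Finset.mem_filter.1 hb).2 k hk2
      have : (2 * T m k b : ℝ) ≤ k := by exact_mod_cast (by omega : 2 * T m k b ≤ k)
      push_cast at this ⊢
      linarith
  have hBeq : {ω | S m ω = 0 ∨ S m ω = 1} = ⋃ b ∈ Bset m, Eset m X b := by
    ext ω
    simp only [Set.mem_setOf_eq, Set.mem_iUnion, exists_prop]
    have key : ∀ b : Fin m → Bool, ω ∈ Eset m X b →
        ((S m ω = 0 ∨ S m ω = 1) ↔ T m m b = (m + 1) / 2) := by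
      intro b hω
      rw [hSsum b ω hω m le_rfl]
      constructor
      · rintro (h | h)
        · have : (2 * T m m b : ℝ) = m := by push_cast; linarith
          have : 2 * T m m b = m := by exact_mod_cast this
          omega
        · have : (2 * T m m b : ℝ) = m + 1 := by push_cast; linarith
          have : 2 * T m m b = m + 1 := by exact_mod_cast this
          omega
      · intro h
        rcases (by omega : 2 * T m m b = m ∨ 2 * T m m b = m + 1) with h' | h'
        · left
          have : (2 * T m m b : ℝ) = m := by exact_mod_cast h'
          push_cast at this ⊢
          linarith
        · right
          have : (2 * T m m b : ℝ) = m + 1 := by exact_mod_cast h'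
          push_cast at this ⊢
          linarith
    constructor
    · intro hω
      refine ⟨fun i : Fin m => decide (X i ω = 1), ?_, hpat ω⟩
      rw [Bset, Finset.mem_filter]
      exact ⟨Finset.mem_univ _, (key _ (hpat ω)).1 hω⟩
    · rintro ⟨b, hb, hω⟩
      exact (key b hω).2 (Finset.mem_filter.1 hb).2
  -- measure of a union of atoms
  have hmeasU : ∀ s : Finset (Fin m → Bool),
      P (⋃ b ∈ s, Eset m X b) = s.card * 2⁻¹ ^ m := by
    intro s
    rw [measure_biUnion_finset ?disj (fun b _ => hEmeas b)]
    · rw [Finset.sum_congr rfl (fun b _ => hEP b), Finset.sum_const, nsmul_eq_mul]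
    case disj =>
      intro b1 _ b2 _ hne
      rw [Function.onFun, Set.disjoint_left]
      intro ω hω1 hω2
      apply hne
      funext i
      have h1 := mem_Eset_iff.1 hω1 i i.isLt
      have h2 := mem_Eset_iff.1 hω2 i i.isLt
      rw [bext, dif_pos i.isLt] at h1 h2
      have hvv : vB (b1 ⟨i, i.isLt⟩) = vB (b2 ⟨i, i.isLt⟩) := by rw [← h1, ← h2]
      have : b1 ⟨i, i.isLt⟩ = b2 ⟨i, i.isLt⟩ := by
        revert hvv
        cases b1 ⟨i, i.isLt⟩ <;> cases b2 ⟨i, i.isLt⟩ <;> intro hvv <;>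
          first
          | rfl
          | (exfalso; simp [vB] at hvv; norm_num at hvv)
          | (exfalso; simp [vB] at hvv)
      simpa using this
  rw [hAeq, hBeq, hmeasU, hmeasU, cards_eq]
  exact le_mul_of_one_le_left zero_le one_le_two
end

section
/- Let γ : (0,∞) → (0,∞) be nondecreasing and let t > 0. Then the set E_t = {ε > 0 : ε²·γ(ε) ≤ 1/t} is nonempty and bounded above; writing ε_t = sup E_t, one has ε + 1/√(γ(ε)·t) ≥ ε_t for every ε > 0, and hence inf_{ε>0} ( ε + 1/√(γ(ε)·t) ) ≥ ε_t. Moreover, if additionally γ(ε) ≤ C for all ε > 0 for some constant C > 0, then ε_t ≥ 1/√(C·t). -/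
/-- For a nondecreasing positive `γ` on `(0,∞)` and `t > 0`, the set
`E_t = {ε > 0 : ε² γ(ε) ≤ 1/t}` is nonempty and bounded above, its supremum `ε_t` satisfies
`ε + 1/√(γ(ε) t) ≥ ε_t` for all `ε > 0` (hence the infimum of the left-hand side over `ε > 0`
is `≥ ε_t`); and if moreover `γ ≤ C`, then `ε_t ≥ 1/√(C t)`. -/
theorem stmt8 (γ : ℝ → ℝ) (hpos : ∀ ε : ℝ, 0 < ε → 0 < γ ε)
    (hmono : ∀ ε₁ ε₂ : ℝ, 0 < ε₁ → ε₁ ≤ ε₂ → γ ε₁ ≤ γ ε₂)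
    (t : ℝ) (ht : 0 < t) :
    ({ε : ℝ | 0 < ε ∧ ε ^ 2 * γ ε ≤ 1 / t}).Nonempty ∧
    BddAbove {ε : ℝ | 0 < ε ∧ ε ^ 2 * γ ε ≤ 1 / t} ∧
    (∀ ε : ℝ, 0 < ε →
      sSup {ε : ℝ | 0 < ε ∧ ε ^ 2 * γ ε ≤ 1 / t} ≤ ε + 1 / Real.sqrt (γ ε * t)) ∧
    (sSup {ε : ℝ | 0 < ε ∧ ε ^ 2 * γ ε ≤ 1 / t}
      ≤ ⨅ ε : {ε : ℝ // 0 < ε}, ((ε : ℝ) + 1 / Real.sqrt (γ ε * t))) ∧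
    (∀ C : ℝ, 0 < C → (∀ ε : ℝ, 0 < ε → γ ε ≤ C) →
      1 / Real.sqrt (C * t) ≤ sSup {ε : ℝ | 0 < ε ∧ ε ^ 2 * γ ε ≤ 1 / t}) := by
  set E := {ε : ℝ | 0 < ε ∧ ε ^ 2 * γ ε ≤ 1 / t} with hE
  have hγ1 : 0 < γ 1 := hpos 1 one_pos
  have htγ1 : 0 < t * γ 1 := mul_pos ht hγ1
  -- Nonempty
  have hne : E.Nonempty := by
    refine ⟨min 1 (1 / Real.sqrt (t * γ 1)), ?_, ?_⟩
    · exact lt_min one_pos (by positivity)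
    · have hεpos : (0:ℝ) < min 1 (1 / Real.sqrt (t * γ 1)) :=
        lt_min one_pos (by positivity)
      have h1 : γ (min 1 (1 / Real.sqrt (t * γ 1))) ≤ γ 1 :=
        hmono _ 1 hεpos (min_le_left _ _)
      have h2 : (min 1 (1 / Real.sqrt (t * γ 1))) ^ 2 ≤ (1 / Real.sqrt (t * γ 1)) ^ 2 :=
        pow_le_pow_left₀ hεpos.le (min_le_right _ _) 2
      have h3 : (1 / Real.sqrt (t * γ 1)) ^ 2 = 1 / (t * γ 1) := by
        rw [div_pow, one_pow, Real.sq_sqrt htγ1.le]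
      calc (min 1 (1 / Real.sqrt (t * γ 1))) ^ 2 * γ (min 1 (1 / Real.sqrt (t * γ 1)))
          ≤ (1 / (t * γ 1)) * γ 1 := by
            rw [← h3]
            exact mul_le_mul h2 h1 (hpos _ hεpos).le (by positivity)
        _ = 1 / t := by field_simp
  -- Bounded above
  have hbdd : BddAbove E := by
    refine ⟨max 1 (1 / Real.sqrt (t * γ 1)), fun x hx => ?_⟩
    obtain ⟨hx0, hx1⟩ := hx
    rcases le_or_gt x 1 with h | h
    · exact h.trans (le_max_left _ _)
    · have hγx : γ 1 ≤ γ x := hmono 1 x one_pos h.le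
      have hx2 : x ^ 2 * γ 1 ≤ 1 / t :=
        le_trans (by nlinarith) hx1
      have hx1' : x ^ 2 * γ x * t ≤ 1 := (le_div_iff₀ ht).mp hx1
      have hx3 : x ^ 2 ≤ 1 / (t * γ 1) := by
        rw [le_div_iff₀ htγ1]
        nlinarith [mul_nonneg (mul_nonneg (sq_nonneg x) (sub_nonneg.mpr hγx)) ht.le]
      have : x ≤ 1 / Real.sqrt (t * γ 1) := by
        have := Real.sqrt_le_sqrt hx3
        rwa [Real.sqrt_sq hx0.le, one_div, Real.sqrt_inv, ← one_div] at this
      exact this.trans (le_max_right _ _)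
  -- key bound
  have hkey : ∀ ε : ℝ, 0 < ε → sSup E ≤ ε + 1 / Real.sqrt (γ ε * t) := by
    intro ε hε
    refine csSup_le hne fun x hx => ?_
    obtain ⟨hx0, hx1⟩ := hx
    rcases le_or_gt x ε with h | h
    · have : (0:ℝ) < 1 / Real.sqrt (γ ε * t) := by
        have := mul_pos (hpos ε hε) ht; positivity
      linarith
    · have hγx : γ ε ≤ γ x := hmono ε x hε h.le
      have hγεt : 0 < γ ε * t := mul_pos (hpos ε hε) ht
      have hx1' : x ^ 2 * γ x * t ≤ 1 := (le_div_iff₀ ht).mp hx1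
      have hx2 : x ^ 2 ≤ 1 / (γ ε * t) := by
        rw [le_div_iff₀ hγεt]
        nlinarith [mul_nonneg (mul_nonneg (sq_nonneg x) (sub_nonneg.mpr hγx)) ht.le]
      have : x ≤ 1 / Real.sqrt (γ ε * t) := by
        have := Real.sqrt_le_sqrt hx2
        rwa [Real.sqrt_sq hx0.le, one_div, Real.sqrt_inv, ← one_div] at this
      linarith
  refine ⟨hne, hbdd, hkey, ?_, ?_⟩
  · exact le_ciInf fun ε => hkey ε ε.2
  · intro C hC hCb
    have hCt : 0 < C * t := mul_pos hC ht
    have hεpos : (0:ℝ) < 1 / Real.sqrt (C * t) := by positivity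
    refine le_csSup hbdd ⟨hεpos, ?_⟩
    have h3 : (1 / Real.sqrt (C * t)) ^ 2 = 1 / (C * t) := by
      rw [div_pow, one_pow, Real.sq_sqrt hCt.le]
    calc (1 / Real.sqrt (C * t)) ^ 2 * γ (1 / Real.sqrt (C * t))
        ≤ (1 / (C * t)) * C := by
          rw [← h3]
          exact mul_le_mul_of_nonneg_left (hCb _ hεpos) (by positivity)
      _ = 1 / t := by field_simp
end

section
/- For every λ > 0, Σ_{k=1}^∞ λ^k / (√k · k!) ≤ √2 · e^λ / √λ. -/
set_option maxHeartbeats 1000000 in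
/-- For every `λ > 0`, `Σ_{k ≥ 1} λ^k / (√k ⬝ k!) ≤ √2 ⬝ e^λ / √λ`. -/
theorem stmt10 (l : ℝ) (hl : 0 < l) :
    ∑' k : ℕ, l ^ (k + 1) / (Real.sqrt (k + 1) * Nat.factorial (k + 1))
      ≤ Real.sqrt 2 * Real.exp l / Real.sqrt l := by
  set P : ℕ → ℝ := fun k => l ^ (k + 1) / Nat.factorial (k + 1) with hP
  have hPpos : ∀ k, 0 < P k := fun k => by
    apply div_pos (pow_pos hl _)
    exact_mod_cast Nat.factorial_pos _
  -- the general exp series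
  have hexp : Real.exp l = ∑' n : ℕ, l ^ n / Nat.factorial n := by
    rw [Real.exp_eq_exp_ℝ, NormedSpace.exp_eq_tsum_div]
  have hsummexp : Summable (fun n : ℕ => l ^ n / Nat.factorial n) :=
    Real.summable_pow_div_factorial l
  -- summability of P
  have hsumP : Summable P :=
    hsummexp.comp_injective (add_left_injective 1)
  -- summability of P k / (k+1)
  have hsumA : Summable (fun k : ℕ => P k / (k + 1)) := by
    apply Summable.of_nonneg_of_le (fun k => by positivity) _ hsumP
    intro k
    apply div_le_self (hPpos k).le
    exact le_add_of_nonneg_left (Nat.cast_nonneg k)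
  -- bound B : tsum P ≤ exp l
  have hB : ∑' k, P k ≤ Real.exp l := by
    rw [hexp]
    exact Summable.tsum_le_tsum_of_inj (fun k => k + 1) (add_left_injective 1)
      (fun c _ => by positivity) (fun k => le_refl _) hsumP hsummexp
  -- bound A : tsum (P k / (k+1)) ≤ 2 / l * exp l
  have hA : ∑' k, P k / (k + 1) ≤ 2 / l * Real.exp l := by
    have step1 : ∀ k : ℕ, P k / (k + 1) ≤ 2 / l * (l ^ (k + 2) / Nat.factorial (k + 2)) := by
      intro k
      have hfac : (Nat.factorial (k + 2) : ℝ) = ((k : ℝ) + 2) * Nat.factorial (k + 1) := by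
        rw [Nat.factorial_succ]; push_cast; ring
      have hfacpos : (0 : ℝ) < Nat.factorial (k + 1) := by exact_mod_cast Nat.factorial_pos _
      have hk1 : (0 : ℝ) < (k : ℝ) + 1 := by positivity
      have hk2 : (0 : ℝ) < (k : ℝ) + 2 := by positivity
      have key : (k : ℝ) + 2 ≤ 2 * ((k : ℝ) + 1) := by linarith
      have hrhs : 2 / l * (l ^ (k + 2) / Nat.factorial (k + 2))
          = 2 * l ^ (k + 1) / (((k : ℝ) + 2) * Nat.factorial (k + 1)) := by
        rw [hfac]
        have : l ^ (k + 2) = l * l ^ (k + 1) := by ring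
        rw [this]
        field_simp
      have hlhs : P k / ((k : ℝ) + 1)
          = l ^ (k + 1) / ((Nat.factorial (k + 1) : ℝ) * ((k : ℝ) + 1)) := by
        rw [hP, div_div]
      rw [hlhs, hrhs, div_le_div_iff₀ (by positivity) (by positivity)]
      nlinarith [mul_le_mul_of_nonneg_left key
        (by positivity : (0:ℝ) ≤ l ^ (k + 1) * (Nat.factorial (k + 1) : ℝ))]
    have hsum2 : Summable (fun k : ℕ => 2 / l * (l ^ (k + 2) / Nat.factorial (k + 2))) :=
      (hsummexp.comp_injective (add_left_injective 2)).mul_left _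
    calc ∑' k, P k / (k + 1) ≤ ∑' k : ℕ, 2 / l * (l ^ (k + 2) / Nat.factorial (k + 2)) :=
          Summable.tsum_le_tsum step1 hsumA hsum2
      _ = 2 / l * ∑' k : ℕ, l ^ (k + 2) / Nat.factorial (k + 2) := tsum_mul_left
      _ ≤ 2 / l * Real.exp l := by
          apply mul_le_mul_of_nonneg_left _ (by positivity)
          rw [hexp]
          exact Summable.tsum_le_tsum_of_inj (fun k => k + 2) (add_left_injective 2)
            (fun c _ => by positivity) (fun k => le_refl _)
            (hsummexp.comp_injective (add_left_injective 2)) hsummexp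
  -- the term is √(P k/(k+1)) * √(P k)
  have hterm : ∀ k : ℕ, l ^ (k + 1) / (Real.sqrt (k + 1) * Nat.factorial (k + 1))
      = Real.sqrt (P k / (k + 1)) * Real.sqrt (P k) := by
    intro k
    have hk1 : (0 : ℝ) < (k : ℝ) + 1 := by positivity
    rw [← Real.sqrt_mul (by positivity)]
    have : P k / (k + 1) * P k = (P k / Real.sqrt (k + 1)) ^ 2 := by
      rw [div_pow, Real.sq_sqrt hk1.le]; ring
    rw [this, Real.sqrt_sq (by positivity), hP]
    have hfacpos : (0 : ℝ) < Nat.factorial (k + 1) := by exact_mod_cast Nat.factorial_pos _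
    have hsq : (0:ℝ) < Real.sqrt ((k : ℝ) + 1) := Real.sqrt_pos.mpr hk1
    push_cast
    field_simp
  -- summability of the LHS
  have hsumf : Summable (fun k : ℕ =>
      l ^ (k + 1) / (Real.sqrt (k + 1) * Nat.factorial (k + 1))) := by
    apply Summable.of_nonneg_of_le (fun k => by positivity) _ hsumP
    intro k
    rw [hP]
    have hfacpos : (0 : ℝ) < Nat.factorial (k + 1) := by exact_mod_cast Nat.factorial_pos _
    have h1 : (1:ℝ) ≤ Real.sqrt ((k : ℝ) + 1) := by
      have := Real.sqrt_le_sqrt (show (1:ℝ) ≤ (k : ℝ) + 1 by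
        have : (0:ℝ) ≤ (k : ℝ) := Nat.cast_nonneg k
        linarith)
      simpa using this
    have h2 : (Nat.factorial (k + 1) : ℝ)
        ≤ Real.sqrt ((k : ℝ) + 1) * Nat.factorial (k + 1) := by
      nlinarith
    exact div_le_div_of_nonneg_left (by positivity) hfacpos h2
  -- final: bound via Cauchy-Schwarz on each finset
  have key : ∑' k : ℕ, l ^ (k + 1) / (Real.sqrt (k + 1) * Nat.factorial (k + 1))
      ≤ Real.sqrt (2 / l * Real.exp l) * Real.sqrt (Real.exp l) := by
    apply Summable.tsum_le_of_sum_le hsumf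
    intro s
    calc ∑ k ∈ s, l ^ (k + 1) / (Real.sqrt (k + 1) * Nat.factorial (k + 1))
        = ∑ k ∈ s, Real.sqrt (P k / (k + 1)) * Real.sqrt (P k) :=
          Finset.sum_congr rfl fun k _ => hterm k
      _ ≤ Real.sqrt (∑ k ∈ s, P k / (k + 1)) * Real.sqrt (∑ k ∈ s, P k) :=
          Real.sum_sqrt_mul_sqrt_le s (fun k => by positivity) (fun k => (hPpos k).le)
      _ ≤ Real.sqrt (2 / l * Real.exp l) * Real.sqrt (Real.exp l) :=
          mul_le_mul
            (Real.sqrt_le_sqrt ((Summable.sum_le_tsum s (fun k _ => by positivity) hsumA).trans hA))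
            (Real.sqrt_le_sqrt ((Summable.sum_le_tsum s (fun k _ => (hPpos k).le) hsumP).trans hB))
            (Real.sqrt_nonneg _) (Real.sqrt_nonneg _)
  refine key.trans_eq ?_
  rw [← Real.sqrt_mul (by positivity)]
  have h3 : 2 / l * Real.exp l * Real.exp l = 2 / l * Real.exp l ^ 2 := by ring
  rw [h3, Real.sqrt_mul (by positivity), Real.sqrt_sq (Real.exp_nonneg l),
    Real.sqrt_div (by norm_num : (0:ℝ) ≤ 2)]
  ring
end

section
/- Let h : ℕ → ℝ satisfy Σ_{k=0}^∞ q_k h_k² < ∞, and let μ_h denote the pushforward of μ under the translation z ↦ z + h of ℝ^ℕ (coordinatewise addition). Then μ_h and μ are mutually absolutely continuous (i.e. μ_h ≪ μ and μ ≪ μ_h). -/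
open MeasureTheory ProbabilityTheory Finset Real Filter
open scoped NNReal ENNReal Topology RealInnerProductSpace

noncomputable section
namespace CMX

/-! ### Product lintegral over `Measure.pi` -/

lemma lintegral_pi_prod {ι : Type*} [Fintype ι] {E : ι → Type*} [∀ i, MeasurableSpace (E i)]
    [∀ i, Nonempty (E i)]
    (m : ∀ i, Measure (E i)) [∀ i, SigmaFinite (m i)]
    (f : ∀ i, E i → ℝ≥0∞) (hf : ∀ i, Measurable (f i)) :
    ∫⁻ x, ∏ i, f i (x i) ∂Measure.pi m = ∏ i, ∫⁻ y, f i y ∂m i := by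
  classical
  have hfm : Measurable fun y : ∀ i, E i => ∏ i, f i (y i) :=
    Finset.measurable_prod _ fun i _ => (hf i).comp (measurable_pi_apply i)
  have key : ∀ (t : Finset ι) (x : ∀ i, E i),
      (∫⋯∫⁻_t, (fun y => ∏ i, f i (y i)) ∂m) x
        = (∏ i ∈ t, ∫⁻ y, f i y ∂m i) * ∏ i ∈ tᶜ, f i (x i) := by
    intro t
    induction t using Finset.induction with
    | empty => intro x; simp
    | @insert i t hi ih =>
      intro x
      rw [lmarginal_insert _ hfm hi]
      have hicompl : i ∈ tᶜ := by simp [hi]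
      calc ∫⁻ xi, (∫⋯∫⁻_t, (fun y => ∏ j, f j (y j)) ∂m) (Function.update x i xi) ∂m i
          = ∫⁻ xi, (∏ j ∈ t, ∫⁻ y, f j y ∂m j) *
              (f i xi * ∏ j ∈ tᶜ.erase i, f j (x j)) ∂m i := by
            refine lintegral_congr fun xi => ?_
            rw [ih]
            congr 1
            rw [← Finset.prod_erase_mul _ _ hicompl]
            rw [Function.update_self]
            rw [mul_comm]
            congr 1
            refine Finset.prod_congr rfl fun j hj => ?_
            rw [Function.update_of_ne (Finset.ne_of_mem_erase hj)]
        _ = (∏ j ∈ insert i t, ∫⁻ y, f j y ∂m j) * ∏ j ∈ (insert i t)ᶜ, f j (x j) := by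
            rw [lintegral_const_mul _ ((hf i).mul_const _),
              lintegral_mul_const _ (hf i),
              Finset.prod_insert hi, Finset.compl_insert]
            ring
  inhabit (∀ i, E i)
  rw [lintegral_eq_lmarginal_univ (default : ∀ i, E i), key]
  simp

/-! ### Per-coordinate Gaussian computations -/

/-- exponential density factor -/
def ee (q a x : ℝ) : ℝ := Real.exp (q*a*x - q*a^2/2)

lemma ee_pos (q a x : ℝ) : 0 < ee q a x := Real.exp_pos _

lemma measurable_ee (q a : ℝ) : Measurable (ee q a) := by
  unfold ee; fun_prop

lemma vv_coe {q : ℝ} (hq : 0 < q) : ((Real.toNNReal q⁻¹ : ℝ≥0) : ℝ) = q⁻¹ :=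
  Real.coe_toNNReal _ (by positivity)

lemma vv_ne {q : ℝ} (hq : 0 < q) : Real.toNNReal q⁻¹ ≠ 0 := by
  simp only [ne_eq, Real.toNNReal_eq_zero, not_le]
  positivity

lemma pdf_mul_ee {q : ℝ} (hq : 0 < q) (a x : ℝ) :
    gaussianPDF 0 (Real.toNNReal q⁻¹) x * ENNReal.ofReal (ee q a x)
      = gaussianPDF a (Real.toNNReal q⁻¹) x := by
  rw [gaussianPDF, gaussianPDF, ← ENNReal.ofReal_mul (gaussianPDFReal_nonneg _ _ _)]
  congr 1
  rw [gaussianPDFReal, gaussianPDFReal, mul_assoc]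
  congr 1
  unfold ee
  rw [← Real.exp_add, vv_coe hq]
  congr 1
  have hq' : q ≠ 0 := ne_of_gt hq
  field_simp
  ring

lemma setLintegral_ee {q : ℝ} (hq : 0 < q) (a : ℝ) {A : Set ℝ} (hA : MeasurableSet A) :
    ∫⁻ x in A, ENNReal.ofReal (ee q a x) ∂(gaussianReal 0 (Real.toNNReal q⁻¹))
      = gaussianReal a (Real.toNNReal q⁻¹) A := by
  rw [gaussianReal_of_var_ne_zero 0 (vv_ne hq), restrict_withDensity hA,
    lintegral_withDensity_eq_lintegral_mul _ (measurable_gaussianPDF _ _)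
      ((measurable_ee q a).ennreal_ofReal)]
  simp only [Pi.mul_apply, pdf_mul_ee hq]
  rw [gaussianReal_apply _ (vv_ne hq)]

lemma lintegral_ee {q : ℝ} (hq : 0 < q) (a : ℝ) :
    ∫⁻ x, ENNReal.ofReal (ee q a x) ∂(gaussianReal 0 (Real.toNNReal q⁻¹)) = 1 := by
  rw [← Measure.restrict_univ (μ := gaussianReal 0 (Real.toNNReal q⁻¹)),
    setLintegral_ee hq a MeasurableSet.univ]
  exact measure_univ

lemma ee_sq (q a x : ℝ) : ee q a x ^ 2 = ee q (2*a) x * Real.exp (q * a^2) := by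
  unfold ee
  rw [← Real.exp_nat_mul, ← Real.exp_add]
  congr 1
  ring

lemma lintegral_ee_sq {q : ℝ} (hq : 0 < q) (a : ℝ) :
    ∫⁻ x, ENNReal.ofReal (ee q a x) ^ 2 ∂(gaussianReal 0 (Real.toNNReal q⁻¹))
      = ENNReal.ofReal (Real.exp (q * a^2)) := by
  have : ∀ x : ℝ, ENNReal.ofReal (ee q a x) ^ 2
      = ENNReal.ofReal (ee q (2*a) x) * ENNReal.ofReal (Real.exp (q * a^2)) := by
    intro x
    rw [← ENNReal.ofReal_pow (ee_pos q a x).le, ee_sq,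
      ENNReal.ofReal_mul (ee_pos q (2*a) x).le]
  simp_rw [this]
  rw [lintegral_mul_const _ ((measurable_ee q (2*a)).ennreal_ofReal), lintegral_ee hq, one_mul]

/-! ### Marginals of the abstract product measure -/

variable (q : ℕ → ℝ) (μ : Measure (ℕ → ℝ))

/-- The cylinder-measure hypothesis. -/
def HypCyl : Prop :=
  ∀ (s : Finset ℕ) (A : ℕ → Set ℝ), (∀ k ∈ s, MeasurableSet (A k)) →
    μ {z : ℕ → ℝ | ∀ k ∈ s, z k ∈ A k}
      = ∏ k ∈ s, gaussianReal 0 (Real.toNNReal (q k)⁻¹) (A k)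

variable {q μ}

lemma measurable_res (s : Finset ℕ) :
    Measurable (fun z : ℕ → ℝ => fun i : s => z i) :=
  measurable_pi_lambda _ fun i => measurable_pi_apply (i : ℕ)

lemma marginal_map (hμ : HypCyl q μ) (s : Finset ℕ) :
    Measure.map (fun z : ℕ → ℝ => fun i : s => z i) μ
      = Measure.pi (fun i : s => gaussianReal 0 (Real.toNNReal (q i)⁻¹)) := by
  classical
  refine (Measure.pi_eq fun A hA => ?_).symm
  rw [Measure.map_apply (measurable_res s) (MeasurableSet.univ_pi hA)]
  set A' : ℕ → Set ℝ := fun k => if hk : k ∈ s then A ⟨k, hk⟩ else Set.univ with hA'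
  have hpre : (fun z : ℕ → ℝ => fun i : s => z i) ⁻¹' Set.pi Set.univ A
      = {z : ℕ → ℝ | ∀ k ∈ s, z k ∈ A' k} := by
    ext z
    simp only [Set.mem_preimage, Set.mem_pi, Set.mem_univ, forall_true_left, Set.mem_setOf_eq]
    constructor
    · intro hz k hk
      simpa [hA', dif_pos hk] using hz ⟨k, hk⟩
    · intro hz i
      have := hz i i.2
      simpa [hA', dif_pos i.2] using this
  rw [hpre, hμ s A' (fun k hk => by simp only [hA', dif_pos hk]; exact hA _)]
  rw [← Finset.prod_attach s (fun k => gaussianReal 0 (Real.toNNReal (q k)⁻¹) (A' k))]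
  refine Finset.prod_congr rfl fun i _ => ?_
  simp only [hA', dif_pos i.2]

lemma lintegral_prod_eval (hμ : HypCyl q μ)
    (s : Finset ℕ) (g : ℕ → ℝ → ℝ≥0∞) (hg : ∀ k, Measurable (g k)) :
    ∫⁻ z, ∏ k ∈ s, g k (z k) ∂μ
      = ∏ k ∈ s, ∫⁻ x, g k x ∂(gaussianReal 0 (Real.toNNReal (q k)⁻¹)) := by
  classical
  have hf : Measurable fun y : s → ℝ => ∏ i : s, g i (y i) :=
    Finset.measurable_prod _ fun i _ =>
      (hg i).comp (show Measurable fun y : s → ℝ => y i from measurable_pi_apply i)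
  calc ∫⁻ z, ∏ k ∈ s, g k (z k) ∂μ
      = ∫⁻ z, ∏ i : s, g i ((fun j : s => z j) i) ∂μ := by
        refine lintegral_congr fun z => ?_
        exact (Finset.prod_coe_sort s _).symm
    _ = ∫⁻ y : s → ℝ, ∏ i : s, g i (y i)
          ∂(Measure.map (fun z : ℕ → ℝ => fun i : s => z i) μ) :=
        (lintegral_map hf (measurable_res s)).symm
    _ = ∫⁻ y : s → ℝ, ∏ i : s, g i (y i)
          ∂(Measure.pi fun i : s => gaussianReal 0 (Real.toNNReal (q i)⁻¹)) := by
        rw [marginal_map hμ s]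
    _ = ∏ i : s, ∫⁻ x, g i x ∂(gaussianReal 0 (Real.toNNReal (q i)⁻¹)) :=
        lintegral_pi_prod _ _ (fun i : s => hg i)
    _ = ∏ k ∈ s, ∫⁻ x, g k x ∂(gaussianReal 0 (Real.toNNReal (q k)⁻¹)) :=
        Finset.prod_coe_sort s
          (fun k => ∫⁻ x, g k x ∂(gaussianReal 0 (Real.toNNReal (q k)⁻¹)))

/-! ### The partial product densities and their moments -/

/-- partial product density -/
def PP (q a : ℕ → ℝ) (n : ℕ) (z : ℕ → ℝ) : ℝ := ∏ k ∈ Finset.range n, ee (q k) (a k) (z k)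

lemma PP_pos (a : ℕ → ℝ) (n : ℕ) (z : ℕ → ℝ) : 0 < PP q a n z :=
  Finset.prod_pos fun k _ => Real.exp_pos _

lemma measurable_PP (a : ℕ → ℝ) (n : ℕ) : Measurable (PP q a n) := by
  unfold PP ee
  fun_prop

lemma ofReal_PP (a : ℕ → ℝ) (n : ℕ) (z : ℕ → ℝ) :
    ENNReal.ofReal (PP q a n z)
      = ∏ k ∈ Finset.range n, ENNReal.ofReal (ee (q k) (a k) (z k)) :=
  ENNReal.ofReal_prod_of_nonneg fun _ _ => (ee_pos _ _ _).le

lemma mom_cross (hq : ∀ k, 0 < q k) (hμ : HypCyl q μ) (a : ℕ → ℝ) {n m : ℕ} (hnm : n ≤ m) :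
    ∫⁻ z, ENNReal.ofReal (PP q a n z * PP q a m z) ∂μ
      = ENNReal.ofReal (Real.exp (∑ k ∈ range n, q k * a k ^ 2)) := by
  classical
  set g : ℕ → ℝ → ℝ≥0∞ := fun k x => if k < n
    then ENNReal.ofReal (ee (q k) (a k) x) ^ 2 else ENNReal.ofReal (ee (q k) (a k) x) with hg
  have hgm : ∀ k, Measurable (g k) := by
    intro k
    by_cases hk : k < n <;> simp only [hg, hk, if_true, if_false]
    · exact Measurable.pow_const (measurable_ee _ _).ennreal_ofReal _
    · exact (measurable_ee _ _).ennreal_ofReal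
  have hsplit : ∀ z : ℕ → ℝ, ENNReal.ofReal (PP q a n z * PP q a m z)
      = ∏ k ∈ range m, g k (z k) := by
    intro z
    rw [ENNReal.ofReal_mul (PP_pos a n z).le, ofReal_PP, ofReal_PP]
    have h1 : ∏ k ∈ range m, ENNReal.ofReal (ee (q k) (a k) (z k))
        = (∏ k ∈ range n, ENNReal.ofReal (ee (q k) (a k) (z k)))
          * ∏ k ∈ Ico n m, ENNReal.ofReal (ee (q k) (a k) (z k)) := by
      rw [range_eq_Ico, ← Finset.prod_Ico_consecutive _ (Nat.zero_le n) hnm, ← range_eq_Ico]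
    have h2 : ∏ k ∈ range m, g k (z k)
        = (∏ k ∈ range n, g k (z k)) * ∏ k ∈ Ico n m, g k (z k) := by
      rw [range_eq_Ico, ← Finset.prod_Ico_consecutive _ (Nat.zero_le n) hnm, ← range_eq_Ico]
    rw [h1, h2]
    have h3 : ∏ k ∈ range n, g k (z k)
        = ∏ k ∈ range n, ENNReal.ofReal (ee (q k) (a k) (z k)) ^ 2 :=
      Finset.prod_congr rfl fun k hk => by
        simp only [hg, if_pos (Finset.mem_range.mp hk)]
    have h4 : ∏ k ∈ Ico n m, g k (z k)
        = ∏ k ∈ Ico n m, ENNReal.ofReal (ee (q k) (a k) (z k)) :=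
      Finset.prod_congr rfl fun k hk => by
        simp only [hg, if_neg (not_lt.mpr (Finset.mem_Ico.mp hk).1)]
    rw [h3, h4, ← mul_assoc, ← Finset.prod_mul_distrib]
    congr 1
    exact Finset.prod_congr rfl fun k _ => (sq _).symm
  simp_rw [hsplit]
  rw [lintegral_prod_eval hμ _ g hgm]
  have h5 : ∀ k ∈ range m, ∫⁻ x, g k x ∂(gaussianReal 0 (Real.toNNReal (q k)⁻¹))
      = if k < n then ENNReal.ofReal (Real.exp (q k * a k ^ 2)) else 1 := by
    intro k _
    by_cases hk : k < n
    · simp only [hg, hk, if_true]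
      exact lintegral_ee_sq (hq k) (a k)
    · simp only [hg, hk, if_false]
      exact lintegral_ee (hq k) (a k)
  rw [Finset.prod_congr rfl h5]
  have h6 : (∏ k ∈ range m, if k < n then ENNReal.ofReal (Real.exp (q k * a k ^ 2)) else 1)
      = ∏ k ∈ range n, ENNReal.ofReal (Real.exp (q k * a k ^ 2)) := by
    rw [← Finset.prod_subset (Finset.range_subset_range.mpr hnm)
      (fun k _ hk => if_neg (by simpa using hk))]
    exact Finset.prod_congr rfl fun k hk => if_pos (Finset.mem_range.mp hk)
  rw [h6, ← ENNReal.ofReal_prod_of_nonneg (fun k _ => (Real.exp_pos _).le), ← Real.exp_sum]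

lemma mom_one (hq : ∀ k, 0 < q k) (hμ : HypCyl q μ) (a : ℕ → ℝ) (n : ℕ) :
    ∫⁻ z, ENNReal.ofReal (PP q a n z) ∂μ = 1 := by
  simp_rw [ofReal_PP]
  rw [lintegral_prod_eval hμ _ _ (fun k => (measurable_ee (q k) (a k)).ennreal_ofReal)]
  exact Finset.prod_eq_one fun k _ => lintegral_ee (hq k) (a k)

lemma mom_cyl (hq : ∀ k, 0 < q k) (hμ : HypCyl q μ) (a : ℕ → ℝ)
    {s : Finset ℕ} {A : ℕ → Set ℝ} (hA : ∀ k, MeasurableSet (A k)) {n : ℕ}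
    (hs : ∀ k ∈ s, k < n) :
    ∫⁻ z in {z : ℕ → ℝ | ∀ k ∈ s, z k ∈ A k}, ENNReal.ofReal (PP q a n z) ∂μ
      = ∏ k ∈ s, gaussianReal (a k) (Real.toNNReal (q k)⁻¹) (A k) := by
  classical
  set B : Set (ℕ → ℝ) := {z : ℕ → ℝ | ∀ k ∈ s, z k ∈ A k} with hB
  have hBm : MeasurableSet B := by
    have : B = ⋂ k ∈ s, (fun z : ℕ → ℝ => z k) ⁻¹' (A k) := by
      ext z; simp [hB]
    rw [this]
    exact MeasurableSet.biInter (Finset.countable_toSet s)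
      fun k _ => (measurable_pi_apply k) (hA k)
  set g : ℕ → ℝ → ℝ≥0∞ := fun k x => if k ∈ s
    then Set.indicator (A k) (fun y => ENNReal.ofReal (ee (q k) (a k) y)) x
    else ENNReal.ofReal (ee (q k) (a k) x) with hg
  have hgm : ∀ k, Measurable (g k) := by
    intro k
    by_cases hk : k ∈ s <;> simp only [hg, hk, if_true, if_false]
    · exact Measurable.indicator (measurable_ee _ _).ennreal_ofReal (hA k)
    · exact (measurable_ee _ _).ennreal_ofReal
  have hpt : ∀ z : ℕ → ℝ, Set.indicator B (fun w => ENNReal.ofReal (PP q a n w)) z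
      = ∏ k ∈ range n, g k (z k) := by
    intro z
    by_cases hz : z ∈ B
    · rw [Set.indicator_of_mem hz, ofReal_PP]
      refine Finset.prod_congr rfl fun k _ => ?_
      by_cases hk : k ∈ s
      · simp only [hg, hk, if_true]
        rw [Set.indicator_of_mem (hz k hk)]
      · simp only [hg, hk, if_false]
    · rw [Set.indicator_of_notMem hz]
      simp only [hB, Set.mem_setOf_eq, not_forall] at hz
      obtain ⟨k, hk, hzk⟩ := hz
      refine (Finset.prod_eq_zero (Finset.mem_range.mpr (hs k hk)) ?_).symm
      simp only [hg, hk, if_true]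
      rw [Set.indicator_of_notMem hzk]
  rw [← lintegral_indicator hBm]
  simp_rw [hpt]
  rw [lintegral_prod_eval hμ _ g hgm]
  have h5 : ∀ k ∈ range n, ∫⁻ x, g k x ∂(gaussianReal 0 (Real.toNNReal (q k)⁻¹))
      = if k ∈ s then gaussianReal (a k) (Real.toNNReal (q k)⁻¹) (A k) else 1 := by
    intro k _
    by_cases hk : k ∈ s <;> simp only [hg, hk, if_true, if_false]
    · rw [lintegral_indicator (hA k)]
      exact setLintegral_ee (hq k) (a k) (hA k)
    · exact lintegral_ee (hq k) (a k)
  rw [Finset.prod_congr rfl h5]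
  rw [← Finset.prod_subset (fun k hk => Finset.mem_range.mpr (hs k hk))
    (fun k _ hk => if_neg hk)]
  exact Finset.prod_congr rfl fun k hk => if_pos hk

/-! ### From lintegral to Bochner integral -/

lemma int_of_lint {α : Type*} [MeasurableSpace α] {ν : Measure α} {f : α → ℝ}
    (hf : Measurable f) (h0 : ∀ x, 0 ≤ f x) {C : ℝ} (hC : 0 ≤ C)
    (hl : ∫⁻ x, ENNReal.ofReal (f x) ∂ν = ENNReal.ofReal C) :
    Integrable f ν ∧ ∫ x, f x ∂ν = C := by
  have hfi : Integrable f ν := by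
    refine ⟨hf.aestronglyMeasurable, ?_⟩
    rw [hasFiniteIntegral_iff_norm]
    have : ∀ x, ENNReal.ofReal ‖f x‖ = ENNReal.ofReal (f x) := fun x => by
      rw [Real.norm_of_nonneg (h0 x)]
    simp_rw [this, hl]
    exact ENNReal.ofReal_lt_top
  refine ⟨hfi, ?_⟩
  rw [integral_eq_lintegral_of_nonneg_ae (ae_of_all _ h0) hf.aestronglyMeasurable, hl,
    ENNReal.toReal_ofReal hC]

/-! ### The L² limit -/

lemma exists_L2_limit (hq : ∀ k, 0 < q k) [IsProbabilityMeasure μ] (hμ : HypCyl q μ)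
    (a : ℕ → ℝ) (hsa : Summable fun k => q k * a k ^ 2) :
    ∃ W : (ℕ → ℝ) → ℝ, Measurable W ∧ MemLp W 2 μ ∧
      Tendsto (fun n => eLpNorm (fun z => PP q a n z - W z) 2 μ) atTop (𝓝 0) := by
  have hc0 : ∀ k, 0 ≤ q k * a k ^ 2 := fun k => mul_nonneg (hq k).le (sq_nonneg _)
  set E : ℕ → ℝ := fun n => Real.exp (∑ k ∈ range n, q k * a k ^ 2) with hE
  have hEmono : Monotone E := fun n m hnm => Real.exp_le_exp.mpr
    (Finset.sum_le_sum_of_subset_of_nonneg (range_subset_range.mpr hnm) (fun k _ _ => hc0 k))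
  set L : ℝ := Real.exp (∑' k, q k * a k ^ 2) with hL
  have hEle : ∀ n, E n ≤ L := fun n =>
    Real.exp_le_exp.mpr (Summable.sum_le_tsum _ (fun k _ => hc0 k) hsa)
  have hEtend : Tendsto E atTop (𝓝 L) :=
    (Real.continuous_exp.tendsto _).comp hsa.hasSum.tendsto_sum_nat
  have hint : ∀ {n m : ℕ}, n ≤ m → Integrable (fun z => PP q a n z * PP q a m z) μ
      ∧ ∫ z, PP q a n z * PP q a m z ∂μ = E n := by
    intro n m hnm
    exact int_of_lint ((measurable_PP a n).mul (measurable_PP a m))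
      (fun z => (mul_pos (PP_pos a n z) (PP_pos a m z)).le) (Real.exp_pos _).le
      (mom_cross hq hμ a hnm)
  have hmem : ∀ n, MemLp (PP q a n) 2 μ := by
    intro n
    rw [memLp_two_iff_integrable_sq (measurable_PP a n).aestronglyMeasurable]
    have := (hint (le_refl n)).1
    simpa [pow_two] using this
  set F : ℕ → Lp ℝ 2 μ := fun n => (hmem n).toLp _ with hF
  have hdist : ∀ {n m : ℕ}, n ≤ m → dist (F n) (F m) = Real.sqrt (E m - E n) := by
    intro n m hnm
    have hD : ⇑(F n - F m) =ᵐ[μ] fun z => PP q a n z - PP q a m z :=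
      (Lp.coeFn_sub _ _).trans (((hmem n).coeFn_toLp).sub ((hmem m).coeFn_toLp))
    have hsq : ‖F n - F m‖ ^ 2 = E m - E n := by
      rw [← real_inner_self_eq_norm_sq, L2.inner_def]
      have h1 : ∫ z, (inner ℝ ((F n - F m : Lp ℝ 2 μ) z) ((F n - F m : Lp ℝ 2 μ) z) : ℝ) ∂μ
          = ∫ z, (PP q a n z - PP q a m z) * (PP q a n z - PP q a m z) ∂μ := by
        refine integral_congr_ae ?_
        filter_upwards [hD] with z hz
        rw [show ((F n - F m : Lp ℝ 2 μ) : (ℕ → ℝ) → ℝ) z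
          = PP q a n z - PP q a m z from hz]
        simp [RCLike.inner_apply, pow_two]
      rw [h1]
      have hexp : ∀ z : ℕ → ℝ, (PP q a n z - PP q a m z) * (PP q a n z - PP q a m z)
          = PP q a m z * PP q a m z - (2 : ℝ) * (PP q a n z * PP q a m z)
            + PP q a n z * PP q a n z := fun z => by ring
      simp_rw [hexp]
      have i2 : Integrable (fun z => (2 : ℝ) * (PP q a n z * PP q a m z)) μ :=
        (hint hnm).1.const_mul 2
      have i1 : Integrable
          (fun z => PP q a m z * PP q a m z - (2 : ℝ) * (PP q a n z * PP q a m z)) μ :=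
        (hint (le_refl m)).1.sub i2
      rw [integral_add i1 (hint (le_refl n)).1, integral_sub (hint (le_refl m)).1 i2,
        integral_const_mul, (hint (le_refl m)).2, (hint hnm).2, (hint (le_refl n)).2]
      ring
    rw [dist_eq_norm, ← Real.sqrt_sq (norm_nonneg (F n - F m)), hsq]
  have hcauchy : CauchySeq F := by
    refine cauchySeq_of_le_tendsto_0 (fun N => Real.sqrt (L - E N)) (fun n m N hn hm => ?_) ?_
    · rcases le_total n m with hnm | hmn
      · rw [hdist hnm]
        refine Real.sqrt_le_sqrt ?_
        have h1 := hEle m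
        have h2 := hEmono hn
        linarith
      · rw [dist_comm, hdist hmn]
        refine Real.sqrt_le_sqrt ?_
        have h1 := hEle n
        have h2 := hEmono hm
        linarith
    · have h0 : Tendsto (fun N => L - E N) atTop (𝓝 0) := by
        simpa using hEtend.const_sub L
      have := (Real.continuous_sqrt.tendsto 0).comp h0
      simpa [Function.comp_def] using this
  obtain ⟨G, hG⟩ := cauchySeq_tendsto_of_complete hcauchy
  refine ⟨⇑G, (Lp.stronglyMeasurable G).measurable, Lp.memLp G, ?_⟩
  have htend := (Lp.tendsto_Lp_iff_tendsto_eLpNorm' F G).mp hG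
  have heq : ∀ n, eLpNorm (⇑(F n) - ⇑G) 2 μ
      = eLpNorm (fun z => PP q a n z - G z) 2 μ := fun n =>
    eLpNorm_congr_ae (((hmem n).coeFn_toLp).sub (EventuallyEq.refl _ _))
  simpa only [heq] using htend

lemma memℒp_PP (hq : ∀ k, 0 < q k) [IsProbabilityMeasure μ] (hμ : HypCyl q μ) (a : ℕ → ℝ)
    (n : ℕ) : MemLp (PP q a n) 2 μ := by
  rw [memLp_two_iff_integrable_sq (measurable_PP a n).aestronglyMeasurable]
  have := (int_of_lint ((measurable_PP a n).mul (measurable_PP a n))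
    (fun z => (mul_pos (PP_pos a n z) (PP_pos a n z)).le) (Real.exp_pos _).le
    (mom_cross hq hμ a (le_refl n))).1
  refine this.congr (ae_of_all _ fun z => ?_); simp [pow_two]

end CMX
end

open CMX

/-- Cameron–Martin-type theorem for the product Gaussian measure `μ = ⊗_k N(0, 1/q_k)` on
`ℝ^ℕ`: if `Σ_k q_k h_k² < ∞`, then the translate `μ_h = μ(· - h)` and `μ` are mutually
absolutely continuous. The product measure `μ` is characterized by its values on cylinder
sets. -/
theorem stmt14 (q : ℕ → ℝ) (hq : ∀ k, 0 < q k)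
    (μ : Measure (ℕ → ℝ)) [IsProbabilityMeasure μ]
    (hμ : ∀ (s : Finset ℕ) (A : ℕ → Set ℝ), (∀ k ∈ s, MeasurableSet (A k)) →
      μ {z : ℕ → ℝ | ∀ k ∈ s, z k ∈ A k}
        = ∏ k ∈ s, gaussianReal 0 (Real.toNNReal (q k)⁻¹) (A k))
    (h : ℕ → ℝ) (hsum : Summable fun k => q k * h k ^ 2) :
    Measure.map (fun z : ℕ → ℝ => z + h) μ ≪ μ ∧
      μ ≪ Measure.map (fun z : ℕ → ℝ => z + h) μ := by
  classical
  have hcyl : HypCyl q μ := hμ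
  have hTm : Measurable (fun z : ℕ → ℝ => z + h) :=
    measurable_pi_lambda _ fun k => by simpa only [Pi.add_apply] using Measurable.add_const (f := fun z : ℕ → ℝ => z k) (measurable_pi_apply k) (h k)
  set μh : Measure (ℕ → ℝ) := Measure.map (fun z : ℕ → ℝ => z + h) μ with hμh
  haveI : IsProbabilityMeasure μh := Measure.isProbabilityMeasure_map hTm.aemeasurable
  -- the L² limits of the two partial-product density sequences
  obtain ⟨W, hWm, hWmem, hWt⟩ := exists_L2_limit hq hcyl h hsum
  have hsum' : Summable fun k => q k * (-h k) ^ 2 := by simpa [neg_pow] using hsum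
  obtain ⟨V, hVm, hVmem, hVt⟩ := exists_L2_limit hq hcyl (fun k => -h k) hsum'
  have hPPmem : ∀ n, MemLp (PP q h n) 2 μ := memℒp_PP hq hcyl h
  -- convergence in measure and a.e. along a subsequence
  have hWim : TendstoInMeasure μ (fun n => PP q h n) atTop W :=
    tendstoInMeasure_of_tendsto_eLpNorm_of_ne_top (p := 2) two_ne_zero ENNReal.ofNat_ne_top
      (fun n => (measurable_PP h n).aestronglyMeasurable) hWmem.1 hWt
  have hVim : TendstoInMeasure μ (fun n => PP q (fun k => -h k) n) atTop V :=
    tendstoInMeasure_of_tendsto_eLpNorm_of_ne_top (p := 2) two_ne_zero ENNReal.ofNat_ne_top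
      (fun n => (measurable_PP _ n).aestronglyMeasurable) hVmem.1 hVt
  obtain ⟨ns, hns_mono, hns_ae⟩ := hWim.exists_seq_tendsto_ae
  have hVim' : TendstoInMeasure μ (fun j => PP q (fun k => -h k) (ns j)) atTop V :=
    fun ε hε => (hVim ε hε).comp hns_mono.tendsto_atTop
  obtain ⟨ms, hms_mono, hms_ae⟩ := hVim'.exists_seq_tendsto_ae
  -- a.e. positivity of W
  have hprod : ∀ (n : ℕ) (z : ℕ → ℝ), PP q h n z * PP q (fun k => -h k) n z
      = Real.exp (-(∑ k ∈ Finset.range n, q k * h k ^ 2)) := by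
    intro n z
    unfold PP ee
    rw [← Finset.prod_mul_distrib]
    simp_rw [← Real.exp_add]
    rw [← Real.exp_sum, ← Finset.sum_neg_distrib]
    congr 1
    refine Finset.sum_congr rfl fun k _ => ?_
    ring
  have hWpos : ∀ᵐ z ∂μ, 0 < W z := by
    filter_upwards [hns_ae, hms_ae] with z hWz hVz
    have h1 : Tendsto (fun j => PP q h (ns (ms j)) z * PP q (fun k => -h k) (ns (ms j)) z)
        atTop (𝓝 (W z * V z)) := (hWz.comp hms_mono.tendsto_atTop).mul hVz
    simp_rw [hprod] at h1
    have h2 : Tendsto (fun j => Real.exp (-(∑ k ∈ Finset.range (ns (ms j)), q k * h k ^ 2)))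
        atTop (𝓝 (Real.exp (-(∑' k, q k * h k ^ 2)))) := by
      refine (Real.continuous_exp.tendsto _).comp ?_
      exact (hsum.hasSum.tendsto_sum_nat.neg).comp (hns_mono.comp hms_mono).tendsto_atTop
    have h3 : W z * V z = Real.exp (-(∑' k, q k * h k ^ 2)) := tendsto_nhds_unique h1 h2
    have hW0 : 0 ≤ W z :=
      ge_of_tendsto hWz (Filter.Eventually.of_forall fun i => (PP_pos h (ns i) z).le)
    refine lt_of_le_of_ne hW0 (Ne.symm ?_)
    intro h0
    rw [h0, zero_mul] at h3
    exact absurd h3.symm (Real.exp_pos _).ne'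
  -- the density measure
  set ρ : Measure (ℕ → ℝ) := μ.withDensity (fun z => ENNReal.ofReal (W z)) with hρ
  have hWint : Integrable W μ :=
    memLp_one_iff_integrable.mp (MemLp.mono_exponent hWmem one_le_two)
  have hPint : ∀ n, Integrable (PP q h n) μ := fun n =>
    (int_of_lint (measurable_PP h n) (fun z => (PP_pos h n z).le) zero_le_one
      (by rw [ENNReal.ofReal_one]; exact mom_one hq hcyl h n)).1
  -- set integrals converge
  have hkey : ∀ B : Set (ℕ → ℝ), MeasurableSet B →
      Tendsto (fun n => ∫ z in B, PP q h n z ∂μ) atTop (𝓝 (∫ z in B, W z ∂μ)) := by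
    intro B hB
    have ht0 : Tendsto (fun n => (eLpNorm (fun z => PP q h n z - W z) 2 μ).toReal)
        atTop (𝓝 0) := by
      have := (ENNReal.tendsto_toReal (by simp : (0 : ℝ≥0∞) ≠ ⊤)).comp hWt
      simpa [Function.comp_def] using this
    rw [tendsto_iff_dist_tendsto_zero]
    refine squeeze_zero (fun n => dist_nonneg) (fun n => ?_) ht0
    have hdm : MemLp (fun z => PP q h n z - W z) 2 μ := (hPPmem n).sub hWmem
    have hdi : Integrable (fun z => PP q h n z - W z) μ :=
      memLp_one_iff_integrable.mp (MemLp.mono_exponent hdm one_le_two)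
    calc dist (∫ z in B, PP q h n z ∂μ) (∫ z in B, W z ∂μ)
        = ‖∫ z in B, (PP q h n z - W z) ∂μ‖ := by
          rw [dist_eq_norm, ← integral_sub ((hPint n).restrict) (hWint.restrict)]
      _ ≤ ∫ z in B, ‖PP q h n z - W z‖ ∂μ := norm_integral_le_integral_norm _
      _ ≤ ∫ z, ‖PP q h n z - W z‖ ∂μ :=
          setIntegral_le_integral hdi.norm (Filter.Eventually.of_forall fun z => norm_nonneg _)
      _ = (∫⁻ z, ‖PP q h n z - W z‖ₑ ∂μ).toReal := integral_norm_eq_lintegral_enorm hdi.1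
      _ = (eLpNorm (fun z => PP q h n z - W z) 1 μ).toReal := by
          rw [eLpNorm_one_eq_lintegral_enorm]
      _ ≤ (eLpNorm (fun z => PP q h n z - W z) 2 μ).toReal := by
          refine ENNReal.toReal_mono hdm.2.ne ?_
          exact eLpNorm_le_eLpNorm_of_exponent_le one_le_two hdm.1
  -- identify μh with ρ on cylinders
  set C : Set (Set (ℕ → ℝ)) := { S | ∃ (s : Finset ℕ) (A : ℕ → Set ℝ),
    (∀ k, MeasurableSet (A k)) ∧ S = {z : ℕ → ℝ | ∀ k ∈ s, z k ∈ A k} } with hC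
  have hCmeas : ∀ S ∈ C, MeasurableSet S := by
    rintro S ⟨s, A, hA, rfl⟩
    have : {z : ℕ → ℝ | ∀ k ∈ s, z k ∈ A k} = ⋂ k ∈ s, (fun z : ℕ → ℝ => z k) ⁻¹' (A k) := by
      ext z; simp
    rw [this]
    exact MeasurableSet.biInter (Finset.countable_toSet s)
      fun k _ => (measurable_pi_apply k) (hA k)
  have hpiC : IsPiSystem C := by
    rintro S1 ⟨s1, A1, hA1, rfl⟩ S2 ⟨s2, A2, hA2, rfl⟩ -
    refine ⟨s1 ∪ s2, fun k => (if k ∈ s1 then A1 k else Set.univ)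
      ∩ (if k ∈ s2 then A2 k else Set.univ), fun k => ?_, ?_⟩
    · refine MeasurableSet.inter ?_ ?_ <;> [skip; skip] <;> split <;>
        first | exact hA1 _ | exact hA2 _ | exact MeasurableSet.univ
    · ext z
      simp only [Set.mem_inter_iff, Set.mem_setOf_eq, Finset.mem_union]
      constructor
      · rintro ⟨h1, h2⟩ k hk
        constructor <;> split
        · exact h1 k ‹_›
        · trivial
        · exact h2 k ‹_›
        · trivial
      · intro hz
        constructor
        · intro k hk
          have := (hz k (Or.inl hk)).1
          rwa [if_pos hk] at this
        · intro k hk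
          have := (hz k (Or.inr hk)).2
          rwa [if_pos hk] at this
  have hgen : (inferInstance : MeasurableSpace (ℕ → ℝ)) = MeasurableSpace.generateFrom C := by
    refine le_antisymm ?_ ?_
    · show MeasurableSpace.pi ≤ MeasurableSpace.generateFrom C
      refine iSup_le fun k => ?_
      intro S hS
      obtain ⟨A, hA, rfl⟩ := hS
      refine MeasurableSpace.measurableSet_generateFrom ⟨{k}, fun _ => A, fun _ => hA, ?_⟩
      ext z; simp
    · rw [MeasurableSpace.generateFrom_le_iff]
      exact hCmeas
  have hcylval : ∀ S ∈ C, μh S = ρ S := by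
    rintro S ⟨s, A, hA, rfl⟩
    have hSm : MeasurableSet {z : ℕ → ℝ | ∀ k ∈ s, z k ∈ A k} :=
      hCmeas _ ⟨s, A, hA, rfl⟩
    set P : ℝ≥0∞ := ∏ k ∈ s, gaussianReal (h k) (Real.toNNReal (q k)⁻¹) (A k) with hP
    have hPfin : P ≠ ⊤ := by
      refine (lt_of_le_of_lt (Finset.prod_le_prod' ?_ : P ≤ ∏ _k ∈ s, 1) ?_).ne
      · exact fun k _ => prob_le_one
      · simp
    -- value of μh on the cylinder
    have hμhval : μh {z : ℕ → ℝ | ∀ k ∈ s, z k ∈ A k} = P := by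
      rw [hμh, Measure.map_apply hTm hSm]
      have hpre : (fun z : ℕ → ℝ => z + h) ⁻¹' {z : ℕ → ℝ | ∀ k ∈ s, z k ∈ A k}
          = {z : ℕ → ℝ | ∀ k ∈ s, z k ∈ (fun x => x + h k) ⁻¹' (A k)} := rfl
      rw [hpre, hμ s _ (fun k _ => (hA k).preimage (measurable_add_const (h k)))]
      refine Finset.prod_congr rfl fun k _ => ?_
      have := gaussianReal_map_add_const (μ := 0) (v := Real.toNNReal (q k)⁻¹) (h k)
      rw [zero_add] at this
      rw [← this, Measure.map_apply (measurable_add_const (h k)) (hA k)]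
    -- value of ρ on the cylinder
    have hNbound : ∀ n, (∀ k ∈ s, k < n) →
        ∫ z in {z : ℕ → ℝ | ∀ k ∈ s, z k ∈ A k}, PP q h n z ∂μ = P.toReal := by
      intro n hn
      refine (int_of_lint (α := ℕ → ℝ) (ν := μ.restrict _) (measurable_PP h n)
        (fun z => (PP_pos h n z).le) ENNReal.toReal_nonneg ?_).2
      rw [ENNReal.ofReal_toReal hPfin]
      exact mom_cyl hq hcyl h hA hn
    have hWval : ∫ z in {z : ℕ → ℝ | ∀ k ∈ s, z k ∈ A k}, W z ∂μ = P.toReal := by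
      refine tendsto_nhds_unique (hkey _ hSm) ?_
      have hev : ∀ᶠ n in atTop, ∫ z in {z : ℕ → ℝ | ∀ k ∈ s, z k ∈ A k}, PP q h n z ∂μ
          = P.toReal := by
        filter_upwards [Filter.eventually_ge_atTop ((s.sup id) + 1)] with n hn
        exact hNbound n fun k hk =>
          lt_of_le_of_lt (Finset.le_sup (f := id) hk) (Nat.lt_of_succ_le hn)
      exact Tendsto.congr' (hev.mono fun n hn => hn.symm) tendsto_const_nhds
    rw [hμhval, hρ, withDensity_apply _ hSm,
      ← ofReal_integral_eq_lintegral_ofReal hWint.restrict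
        (ae_restrict_of_ae (hWpos.mono fun z hz => hz.le)),
      hWval, ENNReal.ofReal_toReal hPfin]
  have huniv : Set.univ ∈ C := ⟨∅, fun _ => Set.univ, fun _ => MeasurableSet.univ, by simp⟩
  have hμhρ : μh = ρ := by
    refine ext_of_generate_finite C hgen hpiC hcylval (hcylval _ huniv)
  constructor
  · rw [hμhρ]
    exact withDensity_absolutelyContinuous μ _
  · rw [hμhρ]
    refine withDensity_absolutelyContinuous' (hWm.ennreal_ofReal).aemeasurable ?_
    exact hWpos.mono fun z hz => (ENNReal.ofReal_pos.mpr hz).ne'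
end

section
/- Let h : ℕ → ℝ satisfy Σ_{k=0}^∞ q_k h_k² < ∞, and let μ_h denote the pushforward of μ under the translation z ↦ z + h of ℝ^ℕ (coordinatewise addition). Then the Radon–Nikodym derivative dμ_h/dμ satisfies ∫_{ℝ^ℕ} (dμ_h/dμ)² dμ = exp( Σ_{k=0}^∞ q_k h_k² ). -/
open MeasureTheory ProbabilityTheory
open scoped NNReal ENNReal

section Aux

open Set Real

/-- Fubini for lower integrals of products over finite pi types. -/
lemma aux_pi_lintegral_prod {n : ℕ} (ν : Fin n → Measure ℝ) [∀ i, SigmaFinite (ν i)]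
    (ψ : Fin n → ℝ → ℝ≥0∞) (hψ : ∀ i, Measurable (ψ i)) :
    ∫⁻ x : Fin n → ℝ, ∏ i, ψ i (x i) ∂Measure.pi ν = ∏ i, ∫⁻ x, ψ i x ∂ν i := by
  induction n with
  | zero => simp
  | succ n ih =>
    have hmp := (measurePreserving_piFinSuccAbove ν 0).symm
    have hmeas : Measurable fun x : Fin (n+1) → ℝ => ∏ i, ψ i (x i) :=
      Finset.measurable_prod _ fun i _ => (hψ i).comp (measurable_pi_apply i)
    calc ∫⁻ x : Fin (n+1) → ℝ, ∏ i, ψ i (x i) ∂Measure.pi ν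
        = ∫⁻ p : ℝ × (Fin n → ℝ), ∏ i, ψ i (((MeasurableEquiv.piFinSuccAbove (fun _ => ℝ) 0).symm p) i)
            ∂((ν 0).prod (Measure.pi fun j => ν ((0:Fin (n+1)).succAbove j))) := (hmp.lintegral_comp hmeas).symm
      _ = ∫⁻ p : ℝ × (Fin n → ℝ), ψ 0 p.1 * ∏ i : Fin n, ψ (Fin.succ i) (p.2 i)
            ∂((ν 0).prod (Measure.pi fun j => ν (Fin.succ j))) := by
          congr 1
          ext p
          simp [MeasurableEquiv.piFinSuccAbove_symm_apply, Fin.prod_univ_succ, Fin.insertNthEquiv,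
            Fin.insertNth_zero, Fin.zero_succAbove]
      _ = (∫⁻ x, ψ 0 x ∂ν 0) * ∏ i : Fin n, ∫⁻ x, ψ (Fin.succ i) x ∂ν (Fin.succ i) := by
          have hprod := lintegral_prod_mul (μ := ν 0)
            (ν := Measure.pi fun j : Fin n => ν (Fin.succ j)) (f := ψ 0)
            (g := fun y : Fin n → ℝ => ∏ i, ψ (Fin.succ i) (y i)) (hψ 0).aemeasurable
            (Finset.measurable_prod _ fun i _ => (hψ _).comp (measurable_pi_apply i)).aemeasurable
          rw [hprod, ih _ _ fun i => hψ i.succ]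
      _ = ∏ i, ∫⁻ x, ψ i x ∂ν i := (Fin.prod_univ_succ fun i => ∫⁻ x, ψ i x ∂ν i).symm

lemma aux_gausspdf_shift {a : ℝ} (ha : 0 < a) (c x : ℝ) :
    gaussianPDF 0 (Real.toNNReal a⁻¹) x * ENNReal.ofReal (Real.exp (a * c * x - a * c ^ 2 / 2))
      = gaussianPDF c (Real.toNNReal a⁻¹) x := by
  have hv : ((Real.toNNReal a⁻¹ : ℝ≥0) : ℝ) = a⁻¹ := Real.coe_toNNReal _ (by positivity)
  rw [gaussianPDF, gaussianPDF, ← ENNReal.ofReal_mul (gaussianPDFReal_nonneg _ _ _)]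
  congr 1
  rw [gaussianPDFReal, gaussianPDFReal, mul_assoc, ← Real.exp_add]
  congr 2
  rw [hv]
  have ha' : a ≠ 0 := ha.ne'
  field_simp
  ring

lemma aux_gauss_shift {a : ℝ} (ha : 0 < a) (c : ℝ) {A : Set ℝ} (hA : MeasurableSet A) :
    ∫⁻ x in A, ENNReal.ofReal (Real.exp (a * c * x - a * c ^ 2 / 2))
        ∂gaussianReal 0 (Real.toNNReal a⁻¹)
      = gaussianReal c (Real.toNNReal a⁻¹) A := by
  have hv : (Real.toNNReal a⁻¹) ≠ 0 := by
    simp only [ne_eq, Real.toNNReal_eq_zero, not_le]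
    positivity
  have hg : Measurable fun x => ENNReal.ofReal (Real.exp (a * c * x - a * c ^ 2 / 2)) := by
    fun_prop
  rw [gaussianReal_of_var_ne_zero _ hv,
    setLIntegral_withDensity_eq_setLIntegral_mul _ (measurable_gaussianPDF _ _) hg hA,
    gaussianReal_apply _ hv]
  refine setLIntegral_congr_fun hA (fun x _ => ?_)
  exact aux_gausspdf_shift ha c x

lemma aux_gauss_shift_w {a : ℝ} (ha : 0 < a) (c w : ℝ) {B : Set ℝ} (hB : MeasurableSet B) :
    ∫⁻ x, ENNReal.ofReal (Real.exp (a * c * x - a * c ^ 2 / 2 + w)) * B.indicator 1 x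
        ∂gaussianReal 0 (Real.toNNReal a⁻¹)
      = ENNReal.ofReal (Real.exp w) * gaussianReal c (Real.toNNReal a⁻¹) B := by
  have h1 : ∀ x, ENNReal.ofReal (Real.exp (a * c * x - a * c ^ 2 / 2 + w)) * B.indicator 1 x
      = B.indicator (fun x => ENNReal.ofReal (Real.exp w)
          * ENNReal.ofReal (Real.exp (a * c * x - a * c ^ 2 / 2))) x := by
    intro x
    by_cases hx : x ∈ B <;>
      simp [hx, Real.exp_add, ← ENNReal.ofReal_mul (Real.exp_nonneg _), mul_comm]
  simp_rw [h1]
  rw [lintegral_indicator hB, lintegral_const_mul _ (by fun_prop), aux_gauss_shift ha c hB]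

/-- The finite-dimensional density of the shifted Gaussian product measure. -/
noncomputable def Gr (q h : ℕ → ℝ) (n : ℕ) (z : ℕ → ℝ) : ℝ :=
  ∏ k ∈ Finset.range n, Real.exp (q k * h k * z k - q k * h k ^ 2 / 2)

lemma Gr_meas (q h : ℕ → ℝ) (n : ℕ) : Measurable (Gr q h n) :=
  Finset.measurable_prod _ fun k _ =>
    (Real.measurable_exp.comp (((measurable_pi_apply k).const_mul _).sub_const _))

lemma Gr_pos (q h : ℕ → ℝ) (n : ℕ) (z : ℕ → ℝ) : 0 < Gr q h n z :=
  Finset.prod_pos fun k _ => Real.exp_pos _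

variable (q h : ℕ → ℝ) (μ : Measure (ℕ → ℝ)) [IsProbabilityMeasure μ]

lemma aux_proj_law
    (hμ : ∀ (s : Finset ℕ) (A : ℕ → Set ℝ), (∀ k ∈ s, MeasurableSet (A k)) →
      μ {z : ℕ → ℝ | ∀ k ∈ s, z k ∈ A k}
        = ∏ k ∈ s, gaussianReal 0 (Real.toNNReal (q k)⁻¹) (A k)) (n : ℕ) :
    Measure.map (fun z : ℕ → ℝ => fun k : Fin n => z k) μ
      = Measure.pi fun k : Fin n => gaussianReal 0 (Real.toNNReal (q (k : ℕ))⁻¹) := by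
  classical
  have hπ : Measurable fun z : ℕ → ℝ => fun k : Fin n => z k :=
    measurable_pi_lambda _ fun k => measurable_pi_apply _
  refine (Measure.pi_eq fun s hs => ?_).symm
  rw [Measure.map_apply hπ (MeasurableSet.univ_pi hs)]
  set A : ℕ → Set ℝ := fun k => if hk : k < n then s ⟨k, hk⟩ else Set.univ with hA
  have hset : (fun z : ℕ → ℝ => fun k : Fin n => z k) ⁻¹' (Set.univ.pi s)
      = {z | ∀ k ∈ Finset.range n, z k ∈ A k} := by
    ext z
    simp only [mem_preimage, Set.mem_univ_pi, Finset.mem_range, mem_setOf_eq]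
    constructor
    · intro hz k hk; simpa [A, hk] using hz ⟨k, hk⟩
    · intro hz k; have := hz k k.isLt; simpa [A, k.isLt] using this
  have hAmeas : ∀ k ∈ Finset.range n, MeasurableSet (A k) := by
    intro k hk
    rw [Finset.mem_range] at hk
    simpa [A, hk] using hs ⟨k, hk⟩
  rw [hset, hμ (Finset.range n) A hAmeas,
    ← Fin.prod_univ_eq_prod_range (fun k => gaussianReal 0 (Real.toNNReal (q k)⁻¹) (A k)) n]
  refine Finset.prod_congr rfl fun k _ => ?_
  congr 1
  simp [A, k.isLt]

lemma aux_mu_prod_lintegral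
    (hμ : ∀ (s : Finset ℕ) (A : ℕ → Set ℝ), (∀ k ∈ s, MeasurableSet (A k)) →
      μ {z : ℕ → ℝ | ∀ k ∈ s, z k ∈ A k}
        = ∏ k ∈ s, gaussianReal 0 (Real.toNNReal (q k)⁻¹) (A k))
    (ψ : ℕ → ℝ → ℝ≥0∞) (hψ : ∀ k, Measurable (ψ k)) (n : ℕ) :
    ∫⁻ z, ∏ k ∈ Finset.range n, ψ k (z k) ∂μ
      = ∏ k ∈ Finset.range n, ∫⁻ x, ψ k x ∂gaussianReal 0 (Real.toNNReal (q k)⁻¹) := by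
  have hπ : Measurable fun z : ℕ → ℝ => fun k : Fin n => z k :=
    measurable_pi_lambda _ fun k => measurable_pi_apply _
  have h1 : ∀ z : ℕ → ℝ, ∏ k ∈ Finset.range n, ψ k (z k) = ∏ k : Fin n, ψ (k : ℕ) (z (k : ℕ)) :=
    fun z => (Fin.prod_univ_eq_prod_range (fun k => ψ k (z k)) n).symm
  simp_rw [h1]
  have hmeas : Measurable fun x : Fin n → ℝ => ∏ k : Fin n, ψ (k : ℕ) (x k) :=
    Finset.measurable_prod _ fun k _ => (hψ _).comp (measurable_pi_apply _)
  have h2 : ∫⁻ z, ∏ k : Fin n, ψ (k : ℕ) (z (k : ℕ)) ∂μ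
      = ∫⁻ x : Fin n → ℝ, ∏ k : Fin n, ψ (k : ℕ) (x k)
          ∂(Measure.map (fun z : ℕ → ℝ => fun k : Fin n => z k) μ) :=
    (lintegral_map hmeas hπ).symm
  rw [h2, aux_proj_law q μ hμ n, aux_pi_lintegral_prod _ _ (fun i => hψ _),
    Fin.prod_univ_eq_prod_range (fun k => ∫⁻ x, ψ k x ∂gaussianReal 0 (Real.toNNReal (q k)⁻¹)) n]

variable (hq : ∀ k, 0 < q k)
  (hμ : ∀ (s : Finset ℕ) (A : ℕ → Set ℝ), (∀ k ∈ s, MeasurableSet (A k)) →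
      μ {z : ℕ → ℝ | ∀ k ∈ s, z k ∈ A k}
        = ∏ k ∈ s, gaussianReal 0 (Real.toNNReal (q k)⁻¹) (A k))

include hq hμ

lemma aux_master (n : ℕ) (d w : ℕ → ℝ) :
    ∫⁻ z, ∏ k ∈ Finset.range n,
        (ENNReal.ofReal (Real.exp (q k * d k * z k - q k * d k ^ 2 / 2 + w k))
          * (Set.univ : Set ℝ).indicator 1 (z k)) ∂μ
      = ENNReal.ofReal (Real.exp (∑ k ∈ Finset.range n, w k)) := by
  rw [aux_mu_prod_lintegral q μ hμ
    (fun k x => ENNReal.ofReal (Real.exp (q k * d k * x - q k * d k ^ 2 / 2 + w k))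
      * (Set.univ : Set ℝ).indicator 1 x)
    (fun k => (ENNReal.measurable_ofReal.comp (Real.measurable_exp.comp
      (((measurable_id.const_mul _).sub_const _).add_const _))).mul
      (measurable_one.indicator MeasurableSet.univ)) n]
  have : ∀ k ∈ Finset.range n,
      ∫⁻ x, ENNReal.ofReal (Real.exp (q k * d k * x - q k * d k ^ 2 / 2 + w k))
          * (Set.univ : Set ℝ).indicator 1 x ∂gaussianReal 0 (Real.toNNReal (q k)⁻¹)
      = ENNReal.ofReal (Real.exp (w k)) := by
    intro k _
    rw [aux_gauss_shift_w (hq k) (d k) (w k) MeasurableSet.univ]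
    simp [measure_univ]
  rw [Finset.prod_congr rfl this, ← ENNReal.ofReal_prod_of_nonneg (fun k _ => Real.exp_nonneg _),
    Real.exp_sum]

lemma aux_lint_Gr_mul {n m : ℕ} (hmn : m ≤ n) :
    ∫⁻ z, ENNReal.ofReal (Gr q h n z * Gr q h m z) ∂μ
      = ENNReal.ofReal (Real.exp (∑ k ∈ Finset.range m, q k * h k ^ 2)) := by
  classical
  set d : ℕ → ℝ := fun k => if k < m then 2 * h k else h k with hd
  set w : ℕ → ℝ := fun k => if k < m then q k * h k ^ 2 else 0 with hw
  have hpt : ∀ z, ENNReal.ofReal (Gr q h n z * Gr q h m z)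
      = ∏ k ∈ Finset.range n,
        (ENNReal.ofReal (Real.exp (q k * d k * z k - q k * d k ^ 2 / 2 + w k))
          * (Set.univ : Set ℝ).indicator 1 (z k)) := by
    intro z
    have hGm : Gr q h m z = ∏ k ∈ Finset.range n,
        (if k < m then Real.exp (q k * h k * z k - q k * h k ^ 2 / 2) else 1) := by
      rw [Gr]
      rw [Finset.prod_congr rfl (fun k hk => (if_pos (Finset.mem_range.mp hk)).symm)]
      exact Finset.prod_subset (Finset.range_subset_range.mpr hmn)
        (fun x _ hx => if_neg (by simpa using hx))
    rw [Gr, hGm, ← Finset.prod_mul_distrib,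
      ENNReal.ofReal_prod_of_nonneg (fun k _ => by positivity)]
    refine Finset.prod_congr rfl fun k _ => ?_
    rw [Set.indicator_univ]
    simp only [Pi.one_apply, mul_one]
    congr 1
    by_cases hk : k < m
    · simp only [hd, hw, if_pos hk]
      rw [← Real.exp_add]
      congr 1
      ring
    · simp only [hd, hw, if_neg hk, mul_one, add_zero]
  simp_rw [hpt]
  rw [aux_master q μ hq hμ n d w]
  congr 2
  rw [show ∑ k ∈ Finset.range m, q k * h k ^ 2
      = ∑ k ∈ Finset.range m, w k from Finset.sum_congr rfl fun k hk =>
        (if_pos (Finset.mem_range.mp hk)).symm]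
  exact (Finset.sum_subset (Finset.range_subset_range.mpr hmn)
    (fun x _ hx => if_neg (by simpa using hx))).symm

lemma aux_int_Gr_mul {n m : ℕ} (hmn : m ≤ n) :
    Integrable (fun z => Gr q h n z * Gr q h m z) μ ∧
    ∫ z, Gr q h n z * Gr q h m z ∂μ
      = Real.exp (∑ k ∈ Finset.range m, q k * h k ^ 2) := by
  have hmeas : Measurable fun z => Gr q h n z * Gr q h m z :=
    (Gr_meas q h n).mul (Gr_meas q h m)
  have hnn : ∀ z, 0 ≤ Gr q h n z * Gr q h m z :=
    fun z => le_of_lt (mul_pos (Gr_pos q h n z) (Gr_pos q h m z))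
  have hint : Integrable (fun z => Gr q h n z * Gr q h m z) μ := by
    refine ⟨hmeas.aestronglyMeasurable, ?_⟩
    rw [hasFiniteIntegral_iff_norm]
    have : ∀ z, ENNReal.ofReal ‖Gr q h n z * Gr q h m z‖
        = ENNReal.ofReal (Gr q h n z * Gr q h m z) := fun z => by
      rw [Real.norm_eq_abs, abs_of_nonneg (hnn z)]
    simp_rw [this]
    rw [aux_lint_Gr_mul q h μ hq hμ hmn]
    exact ENNReal.ofReal_lt_top
  refine ⟨hint, ?_⟩
  rw [integral_eq_lintegral_of_nonneg_ae (ae_of_all _ hnn) hmeas.aestronglyMeasurable,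
    aux_lint_Gr_mul q h μ hq hμ hmn, ENNReal.toReal_ofReal (Real.exp_nonneg _)]

lemma aux_lint_Gr_cyl
    (s : Finset ℕ) (A : ℕ → Set ℝ) (hA : ∀ k ∈ s, MeasurableSet (A k))
    {n : ℕ} (hn : ∀ k ∈ s, k < n) :
    ∫⁻ z in (↑s : Set ℕ).pi A, ENNReal.ofReal (Gr q h n z) ∂μ
      = Measure.map (fun z : ℕ → ℝ => z + h) μ ((↑s : Set ℕ).pi A) := by
  classical
  set B : ℕ → Set ℝ := fun k => if k ∈ s then A k else Set.univ with hB
  have hBmeas : ∀ k, MeasurableSet (B k) := by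
    intro k
    by_cases hk : k ∈ s
    · simpa [B, hk] using hA k hk
    · simp [B, hk]
  have hpi : MeasurableSet ((↑s : Set ℕ).pi A) :=
    MeasurableSet.pi s.countable_toSet fun k hk => hA k hk
  have hadd : Measurable fun z : ℕ → ℝ => z + h := by
    have : (fun z : ℕ → ℝ => z + h) = fun z => fun k => z k + h k := rfl
    rw [this]
    exact measurable_pi_lambda _ fun k => (measurable_pi_apply k).add_const _
  have hRHS : Measure.map (fun z : ℕ → ℝ => z + h) μ ((↑s : Set ℕ).pi A)
      = ∏ k ∈ s, gaussianReal (0 + h k) (Real.toNNReal (q k)⁻¹) (A k) := by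
    rw [Measure.map_apply hadd hpi]
    have hpre : (fun z : ℕ → ℝ => z + h) ⁻¹' ((↑s : Set ℕ).pi A)
        = {z : ℕ → ℝ | ∀ k ∈ s, z k ∈ (fun x => x + h k) ⁻¹' (A k)} := by
      ext z
      simp [Set.mem_pi]
    rw [hpre, hμ s _ (fun k hk => (hA k hk).preimage (measurable_add_const _))]
    refine Finset.prod_congr rfl fun k hk => ?_
    rw [← gaussianReal_map_add_const (h k), Measure.map_apply (measurable_add_const _) (hA k hk)]
  set ψ : ℕ → ℝ → ℝ≥0∞ := fun k x =>
    ENNReal.ofReal (Real.exp (q k * h k * x - q k * h k ^ 2 / 2 + 0))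
      * (B k).indicator 1 x with hψdef
  have hψm : ∀ k, Measurable (ψ k) := fun k =>
    (ENNReal.measurable_ofReal.comp (Real.measurable_exp.comp
      (((measurable_id.const_mul _).sub_const _).add_const _))).mul
      (measurable_one.indicator (hBmeas k))
  have hpt : ∀ z, ((↑s : Set ℕ).pi A).indicator (fun z => ENNReal.ofReal (Gr q h n z)) z
      = ∏ k ∈ Finset.range n, ψ k (z k) := by
    intro z
    by_cases hz : z ∈ (↑s : Set ℕ).pi A
    · rw [Set.indicator_of_mem hz, Gr,
        ENNReal.ofReal_prod_of_nonneg (fun k _ => Real.exp_nonneg _)]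
      refine Finset.prod_congr rfl fun k _ => ?_
      have hzk : z k ∈ B k := by
        by_cases hk : k ∈ s
        · simpa [B, hk] using hz k hk
        · simp [B, hk]
      rw [hψdef]
      simp only [Set.indicator_of_mem hzk, Pi.one_apply, mul_one, add_zero]
    · rw [Set.indicator_of_notMem hz]
      rw [Set.mem_pi] at hz
      push_neg at hz
      obtain ⟨k0, hk0s, hk0⟩ := hz
      have hk0s' : k0 ∈ s := Finset.mem_coe.mp hk0s
      refine (Finset.prod_eq_zero (Finset.mem_range.mpr (hn k0 hk0s')) ?_).symm
      have : z k0 ∉ B k0 := by simpa [B, hk0s'] using hk0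
      rw [hψdef]
      simp only [Set.indicator_of_notMem this, mul_zero]
  rw [← lintegral_indicator hpi, lintegral_congr hpt,
    aux_mu_prod_lintegral q μ hμ ψ hψm n]
  have hval : ∀ k ∈ Finset.range n,
      ∫⁻ x, ψ k x ∂gaussianReal 0 (Real.toNNReal (q k)⁻¹)
        = gaussianReal (h k) (Real.toNNReal (q k)⁻¹) (B k) := by
    intro k _
    rw [hψdef]
    simp only []
    rw [aux_gauss_shift_w (hq k) (h k) 0 (hBmeas k), Real.exp_zero, ENNReal.ofReal_one, one_mul]
  rw [Finset.prod_congr rfl hval, hRHS]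
  have hsub : s ⊆ Finset.range n := fun k hk => Finset.mem_range.mpr (hn k hk)
  rw [← Finset.prod_subset hsub (fun k _ hk => by
    have : B k = Set.univ := by simp [B, hk]
    rw [this]
    exact measure_univ)]
  refine Finset.prod_congr rfl fun k hk => ?_
  rw [zero_add]
  congr 1
  simp [B, hk]

end Aux

/-- `eLpNorm` at exponent 2, for real functions, via the lower integral of the square. -/
lemma aux_eLpNorm_two {X : Type*} [MeasurableSpace X] (μ : Measure X) (f : X → ℝ) :
    eLpNorm f 2 μ = (∫⁻ x, ENNReal.ofReal (f x * f x) ∂μ) ^ (1/2 : ℝ) := by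
  rw [eLpNorm_eq_lintegral_rpow_enorm_toReal two_ne_zero ENNReal.ofNat_ne_top]
  have h2 : ((2 : ℝ≥0∞)).toReal = (2 : ℝ) := by simp
  rw [h2]
  congr 1
  refine lintegral_congr fun x => ?_
  rw [← ofReal_norm_eq_enorm, show (2:ℝ) = ((2:ℕ):ℝ) by norm_num,
    ENNReal.rpow_natCast, ← ENNReal.ofReal_pow (norm_nonneg _)]
  congr 1
  rw [Real.norm_eq_abs, pow_two, abs_mul_abs_self]

/-- For the product Gaussian measure `μ = ⊗_k N(0, 1/q_k)` on `ℝ^ℕ` (characterized by its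
values on cylinder sets) and `h` with `Σ_k q_k h_k² < ∞`, the Radon–Nikodym derivative of
the translate `μ_h = μ(· - h)` with respect to `μ` satisfies
`∫ (dμ_h/dμ)² dμ = exp(Σ_k q_k h_k²)`. -/
theorem stmt15 (q : ℕ → ℝ) (hq : ∀ k, 0 < q k)
    (μ : Measure (ℕ → ℝ)) [IsProbabilityMeasure μ]
    (hμ : ∀ (s : Finset ℕ) (A : ℕ → Set ℝ), (∀ k ∈ s, MeasurableSet (A k)) →
      μ {z : ℕ → ℝ | ∀ k ∈ s, z k ∈ A k}
        = ∏ k ∈ s, gaussianReal 0 (Real.toNNReal (q k)⁻¹) (A k))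
    (h : ℕ → ℝ) (hsum : Summable fun k => q k * h k ^ 2) :
    ∫⁻ z, (Measure.rnDeriv (Measure.map (fun z : ℕ → ℝ => z + h) μ) μ z) ^ 2 ∂μ
      = ENNReal.ofReal (Real.exp (∑' k, q k * h k ^ 2)) := by
  classical
  have hadd : Measurable fun z : ℕ → ℝ => z + h := by
    have : (fun z : ℕ → ℝ => z + h) = fun z => fun k => z k + h k := rfl
    rw [this]
    exact measurable_pi_lambda _ fun k => (measurable_pi_apply k).add_const _
  have hmapP : IsProbabilityMeasure (Measure.map (fun z : ℕ → ℝ => z + h) μ) :=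
    Measure.isProbabilityMeasure_map hadd.aemeasurable
  -- abbreviations
  set E : ℕ → ℝ := fun n => Real.exp (∑ k ∈ Finset.range n, q k * h k ^ 2) with hEdef
  have hEmono : Monotone E := by
    intro a b hab
    exact Real.exp_le_exp.mpr (Finset.sum_le_sum_of_subset_of_nonneg
      (Finset.range_subset_range.mpr hab) (fun k _ _ => mul_nonneg (hq k).le (sq_nonneg _)))
  have hEtend : Filter.Tendsto E Filter.atTop (nhds (Real.exp (∑' k, q k * h k ^ 2))) :=
    (Real.continuous_exp.tendsto _).comp hsum.hasSum.tendsto_sum_nat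
  -- membership in L²
  have hmem : ∀ n, MemLp (Gr q h n) 2 μ := fun n => by
    rw [memLp_two_iff_integrable_sq (Gr_meas q h n).aestronglyMeasurable]
    have := (aux_int_Gr_mul q h μ hq hμ (le_refl n)).1
    simpa [pow_two] using this
  set Lseq : ℕ → Lp ℝ 2 μ := fun n => (hmem n).toLp (Gr q h n) with hLseqdef
  -- eLpNorm computations
  have help : ∀ (f : (ℕ → ℝ) → ℝ) (r : ℝ), 0 ≤ r →
      (∫⁻ z, ENNReal.ofReal (f z * f z) ∂μ) = ENNReal.ofReal r →
      eLpNorm f 2 μ = ENNReal.ofReal (Real.sqrt r) := by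
    intro f r hr hI
    rw [aux_eLpNorm_two μ f, hI, ENNReal.ofReal_rpow_of_nonneg hr (by norm_num),
      Real.sqrt_eq_rpow]
  have hdiff : ∀ n m, m ≤ n → eLpNorm (fun z => Gr q h n z - Gr q h m z) 2 μ
      = ENNReal.ofReal (Real.sqrt (E n - E m)) := by
    intro n m hmn
    have e1 := aux_int_Gr_mul q h μ hq hμ (le_refl n)
    have e2 := aux_int_Gr_mul q h μ hq hμ hmn
    have e3 := aux_int_Gr_mul q h μ hq hμ (le_refl m)
    have hfun : (fun z => (Gr q h n z - Gr q h m z) * (Gr q h n z - Gr q h m z))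
        = fun z => Gr q h n z * Gr q h n z
            - (Gr q h n z * Gr q h m z + (Gr q h n z * Gr q h m z - Gr q h m z * Gr q h m z)) := by
      funext z; ring
    have hint3 : Integrable (fun z => Gr q h n z * Gr q h m z - Gr q h m z * Gr q h m z) μ :=
      e2.1.sub e3.1
    have hint2 : Integrable (fun z => Gr q h n z * Gr q h m z
        + (Gr q h n z * Gr q h m z - Gr q h m z * Gr q h m z)) μ := e2.1.add hint3
    have hint : Integrable (fun z => (Gr q h n z - Gr q h m z) * (Gr q h n z - Gr q h m z)) μ := by
      rw [hfun]; exact e1.1.sub hint2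
    have hval : ∫ z, (Gr q h n z - Gr q h m z) * (Gr q h n z - Gr q h m z) ∂μ = E n - E m := by
      rw [hfun, integral_sub e1.1 hint2, integral_add e2.1 hint3,
        integral_sub e2.1 e3.1, e1.2, e2.2, e3.2]
      ring
    refine help _ (E n - E m) (sub_nonneg.mpr (hEmono hmn)) ?_
    rw [← ofReal_integral_eq_lintegral_ofReal hint (ae_of_all _ fun z => mul_self_nonneg _), hval]
  have hnormn : ∀ n, eLpNorm (Gr q h n) 2 μ = ENNReal.ofReal (Real.sqrt (E n)) := by
    intro n
    refine help _ (E n) (Real.exp_nonneg _) ?_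
    exact aux_lint_Gr_mul q h μ hq hμ (le_refl n)
  -- Cauchy sequence in L²
  have hdist : ∀ n m, m ≤ n → dist (Lseq n) (Lseq m) = Real.sqrt (E n - E m) := by
    intro n m hmn
    have hae : eLpNorm (⇑(Lseq n) - ⇑(Lseq m)) 2 μ
        = eLpNorm (fun z => Gr q h n z - Gr q h m z) 2 μ := by
      refine eLpNorm_congr_ae ?_
      filter_upwards [(hmem n).coeFn_toLp, (hmem m).coeFn_toLp] with z h1 h2
      simp [hLseqdef, h1, h2]
    rw [Lp.dist_def, hae, hdiff n m hmn, ENNReal.toReal_ofReal (Real.sqrt_nonneg _)]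
  have hcau : CauchySeq Lseq := by
    rw [Metric.cauchySeq_iff']
    intro ε hε
    obtain ⟨N, hN⟩ := Metric.cauchySeq_iff'.mp hEtend.cauchySeq (ε ^ 2) (by positivity)
    refine ⟨N, fun n hn => ?_⟩
    rw [hdist n N hn]
    have h2 : |E n - E N| < ε ^ 2 := by simpa [Real.dist_eq] using hN n hn
    exact (Real.sqrt_lt' hε).mpr (lt_of_le_of_lt (le_abs_self _) h2)
  obtain ⟨L, hL⟩ := cauchySeq_tendsto_of_complete hcau
  set Gfun : (ℕ → ℝ) → ℝ := fun z => ‖(L : Lp ℝ 2 μ) z‖ with hGfun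
  have hGm : Measurable Gfun := (Lp.stronglyMeasurable L).measurable.norm
  have hGnn : ∀ z, 0 ≤ Gfun z := fun z => norm_nonneg _
  -- integrability facts
  have hIGr : ∀ n, Integrable (Gr q h n) μ := fun n => (hmem n).integrable one_le_two
  have hIL : Integrable (⇑L) μ := (Lp.memLp L).integrable one_le_two
  have hIGfun : Integrable Gfun μ := hIL.norm
  have hnormtend : Filter.Tendsto (fun n => ‖Lseq n - L‖) Filter.atTop (nhds 0) := by
    have h0 : Filter.Tendsto (fun n => Lseq n - L) Filter.atTop (nhds (L - L)) :=
      hL.sub tendsto_const_nhds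
    rw [sub_self] at h0
    simpa using h0.norm
  -- set-integral approximation bound
  have hbound : ∀ (U : Set (ℕ → ℝ)) (n : ℕ),
      |∫ z in U, Gr q h n z ∂μ - ∫ z in U, Gfun z ∂μ| ≤ ‖Lseq n - L‖ := by
    intro U n
    have hD : MemLp (fun z => Gr q h n z - (L : Lp ℝ 2 μ) z) 2 μ := (hmem n).sub (Lp.memLp L)
    have hDint : Integrable (fun z => Gr q h n z - (L : Lp ℝ 2 μ) z) μ :=
      (hIGr n).sub hIL
    have step1 : ∀ z, |Gr q h n z - Gfun z| ≤ |Gr q h n z - (L : Lp ℝ 2 μ) z| := by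
      intro z
      rw [hGfun]
      calc |Gr q h n z - ‖(L : Lp ℝ 2 μ) z‖|
          = |abs (Gr q h n z) - abs ((L : Lp ℝ 2 μ) z)| := by
            rw [Real.norm_eq_abs, abs_of_nonneg (Gr_pos q h n z).le]
        _ ≤ |Gr q h n z - (L : Lp ℝ 2 μ) z| := abs_abs_sub_abs_le_abs_sub _ _
    calc |∫ z in U, Gr q h n z ∂μ - ∫ z in U, Gfun z ∂μ|
        = |∫ z in U, (Gr q h n z - Gfun z) ∂μ| := by
          rw [integral_sub ((hIGr n).restrict) (hIGfun.restrict)]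
      _ ≤ ∫ z in U, |Gr q h n z - Gfun z| ∂μ := by
          rw [← Real.norm_eq_abs (∫ z in U, _ ∂μ)]
          exact (norm_integral_le_integral_norm _).trans (le_of_eq (by simp [Real.norm_eq_abs]))
      _ ≤ ∫ z, |Gr q h n z - Gfun z| ∂μ :=
          integral_mono_measure Measure.restrict_le_self
            (ae_of_all _ fun z => abs_nonneg _) ((hIGr n).sub hIGfun).abs
      _ ≤ ∫ z, |Gr q h n z - (L : Lp ℝ 2 μ) z| ∂μ :=
          integral_mono ((hIGr n).sub hIGfun).abs hDint.abs step1
      _ = (eLpNorm (fun z => Gr q h n z - (L : Lp ℝ 2 μ) z) 1 μ).toReal := by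
          rw [eLpNorm_one_eq_lintegral_enorm,
            ← ofReal_integral_norm_eq_lintegral_enorm hDint,
            ENNReal.toReal_ofReal (integral_nonneg fun z => norm_nonneg _)]
          simp [Real.norm_eq_abs]
      _ ≤ (eLpNorm (fun z => Gr q h n z - (L : Lp ℝ 2 μ) z) 2 μ).toReal :=
          ENNReal.toReal_mono hD.eLpNorm_ne_top
            (eLpNorm_le_eLpNorm_of_exponent_le one_le_two hDint.aestronglyMeasurable)
      _ = ‖Lseq n - L‖ := by
          rw [Lp.norm_def]
          congr 1
          refine (eLpNorm_congr_ae ?_).symm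
          filter_upwards [Lp.coeFn_sub (Lseq n) L, (hmem n).coeFn_toLp] with z h1 h2
          rw [h1]
          simp [hLseqdef, h2]
  -- identification of the translated measure as a density measure
  have key : Measure.map (fun z : ℕ → ℝ => z + h) μ
      = μ.withDensity (fun z => ENNReal.ofReal (Gfun z)) := by
    have hsq : ∀ U ∈ squareCylinders (fun _ : ℕ => {s : Set ℝ | MeasurableSet s}),
        Measure.map (fun z : ℕ → ℝ => z + h) μ U
          = μ.withDensity (fun z => ENNReal.ofReal (Gfun z)) U := by
      rintro U ⟨s, A, hA, rfl⟩
      have hA' : ∀ k, MeasurableSet (A k) := by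
        intro k
        have := hA k (Set.mem_univ k)
        exact this
      have hpimeas : MeasurableSet ((↑s : Set ℕ).pi A) :=
        MeasurableSet.pi s.countable_toSet fun k _ => hA' k
      set N : ℕ := s.sup id + 1 with hN
      have hn : ∀ k ∈ s, k < N := fun k hk => Nat.lt_succ_of_le (Finset.le_sup (f := id) hk)
      -- the sequence of set integrals is eventually constant
      have hconst : ∀ n, N ≤ n → ∫ z in (↑s : Set ℕ).pi A, Gr q h n z ∂μ
          = (Measure.map (fun z : ℕ → ℝ => z + h) μ ((↑s : Set ℕ).pi A)).toReal := by
        intro n hn'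
        have hcyl := aux_lint_Gr_cyl q h μ hq hμ s A (fun k hk => hA' k)
          (fun k hk => lt_of_lt_of_le (hn k hk) hn')
        have : ENNReal.ofReal (∫ z in (↑s : Set ℕ).pi A, Gr q h n z ∂μ)
            = Measure.map (fun z : ℕ → ℝ => z + h) μ ((↑s : Set ℕ).pi A) := by
          rw [ofReal_integral_eq_lintegral_ofReal ((hIGr n).restrict)
            (ae_of_all _ fun z => (Gr_pos q h n z).le), hcyl]
        rw [← this, ENNReal.toReal_ofReal
          (integral_nonneg fun z => (Gr_pos q h n z).le)]
      have htend1 : Filter.Tendsto (fun n => ∫ z in (↑s : Set ℕ).pi A, Gr q h n z ∂μ)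
          Filter.atTop (nhds ((Measure.map (fun z : ℕ → ℝ => z + h) μ ((↑s : Set ℕ).pi A)).toReal)) :=
        tendsto_atTop_of_eventually_const hconst
      have htend2 : Filter.Tendsto (fun n => ∫ z in (↑s : Set ℕ).pi A, Gr q h n z ∂μ)
          Filter.atTop (nhds (∫ z in (↑s : Set ℕ).pi A, Gfun z ∂μ)) := by
        rw [tendsto_iff_dist_tendsto_zero]
        refine squeeze_zero (fun n => dist_nonneg) (fun n => ?_) hnormtend
        rw [Real.dist_eq]
        exact hbound _ n
      have heq : (Measure.map (fun z : ℕ → ℝ => z + h) μ ((↑s : Set ℕ).pi A)).toReal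
          = ∫ z in (↑s : Set ℕ).pi A, Gfun z ∂μ := tendsto_nhds_unique htend1 htend2
      rw [withDensity_apply _ hpimeas,
        ← ofReal_integral_eq_lintegral_ofReal (hIGfun.restrict)
          (ae_of_all _ fun z => hGnn z), ← heq,
        ENNReal.ofReal_toReal (measure_ne_top _ _)]
    refine ext_of_generate_finite (squareCylinders fun _ : ℕ => {s : Set ℝ | MeasurableSet s})
      ?_ (isPiSystem_squareCylinders (fun _ => MeasurableSpace.isPiSystem_measurableSet)
        (fun _ => by simp)) hsq ?_
    · exact generateFrom_squareCylinders.symm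
    · have huniv : (Set.univ : Set (ℕ → ℝ))
          ∈ squareCylinders (fun _ : ℕ => {s : Set ℝ | MeasurableSet s}) := by
        refine ⟨∅, fun _ => Set.univ, ?_, ?_⟩
        · intro k _; simp
        · simp
      exact hsq _ huniv
  -- conclude via the Radon-Nikodym derivative
  have hrn : Measure.rnDeriv (Measure.map (fun z : ℕ → ℝ => z + h) μ) μ
      =ᵐ[μ] fun z => ENNReal.ofReal (Gfun z) := by
    rw [key]
    exact Measure.rnDeriv_withDensity μ (ENNReal.measurable_ofReal.comp hGm)
  have hstep : ∫⁻ z, (Measure.rnDeriv (Measure.map (fun z : ℕ → ℝ => z + h) μ) μ z) ^ 2 ∂μ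
      = ∫⁻ z, ENNReal.ofReal (Gfun z * Gfun z) ∂μ := by
    refine lintegral_congr_ae (hrn.mono fun z hz => ?_)
    have hz' : Measure.rnDeriv (Measure.map (fun z : ℕ → ℝ => z + h) μ) μ z
        = ENNReal.ofReal (Gfun z) := hz
    show Measure.rnDeriv (Measure.map (fun z : ℕ → ℝ => z + h) μ) μ z ^ 2
        = ENNReal.ofReal (Gfun z * Gfun z)
    rw [hz', pow_two, ← ENNReal.ofReal_mul (hGnn z)]
  rw [hstep]
  -- compute the norm of the limit
  have hnormLseq : ∀ n, ‖Lseq n‖ = Real.sqrt (E n) := by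
    intro n
    rw [Lp.norm_def, eLpNorm_congr_ae ((hmem n).coeFn_toLp), hnormn n,
      ENNReal.toReal_ofReal (Real.sqrt_nonneg _)]
  have hnormL : ‖L‖ = Real.sqrt (Real.exp (∑' k, q k * h k ^ 2)) := by
    have h1 : Filter.Tendsto (fun n => ‖Lseq n‖) Filter.atTop (nhds ‖L‖) := hL.norm
    have h2 : Filter.Tendsto (fun n => ‖Lseq n‖) Filter.atTop
        (nhds (Real.sqrt (Real.exp (∑' k, q k * h k ^ 2)))) := by
      simp_rw [hnormLseq]
      exact (Real.continuous_sqrt.tendsto _).comp hEtend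
    exact tendsto_nhds_unique h1 h2
  have hLint : ∫⁻ z, ENNReal.ofReal (Gfun z * Gfun z) ∂μ
      = (eLpNorm (⇑L) 2 μ) ^ (2 : ℝ) := by
    have : ∀ z, ENNReal.ofReal (Gfun z * Gfun z)
        = ENNReal.ofReal ((L : Lp ℝ 2 μ) z * (L : Lp ℝ 2 μ) z) := by
      intro z
      congr 1
      show ‖(L : Lp ℝ 2 μ) z‖ * ‖(L : Lp ℝ 2 μ) z‖ = (L : Lp ℝ 2 μ) z * (L : Lp ℝ 2 μ) z
      rw [Real.norm_eq_abs, abs_mul_abs_self]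
    rw [lintegral_congr this, aux_eLpNorm_two μ (⇑L), ← ENNReal.rpow_mul]
    norm_num
  rw [hLint]
  have heL : eLpNorm (⇑L) 2 μ
      = ENNReal.ofReal (Real.sqrt (Real.exp (∑' k, q k * h k ^ 2))) := by
    rw [← ENNReal.ofReal_toReal (Lp.eLpNorm_ne_top L), ← Lp.norm_def, hnormL]
  rw [heL, ENNReal.ofReal_rpow_of_nonneg (Real.sqrt_nonneg _) (by norm_num)]
  congr 1
  rw [show ((2:ℝ)) = ((2:ℕ):ℝ) by norm_num, Real.rpow_natCast,
    Real.sq_sqrt (Real.exp_nonneg _)]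
end
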